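/- arXiv:2005.07084 — 6 statements merged into one kernel-verified Lean document; each statement's English description precedes it below -/
import Mathlib

section
/- Let d ≥ 1, β > 0, n > 0, and let f : ℝ^d → ℝ be continuous with f ≥ 0 and Lipschitz continuous with constant L_f on the ball B_n = {x ∈ ℝ^d : |x| ≤ n}. Then there exists a constant C₁ > 0, depending only on β, n, L_f, and the infimum f̲ and supremum f̄ of f on B_n, such that for all continuous paths φ, φ̂ : [0,∞) → ℝ^d and all t > 0 with ‖φ‖_t ≤ n and ‖φ̂‖_t ≤ n one has |p_f[φ](t) − p_f[φ̂](t)| ≤ C₁ ‖φ − φ̂‖_t. -/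
open scoped BigOperators

/-- The weighted personal best `p_f[φ](t)` along a path `φ`. -/
noncomputable def personalBest {d : ℕ} (β : ℝ) (f : EuclideanSpace ℝ (Fin d) → ℝ)
    (φ : ℝ → EuclideanSpace ℝ (Fin d)) (t : ℝ) : EuclideanSpace ℝ (Fin d) :=
  if t = 0 then φ 0
  else (∫ s in (0:ℝ)..t, Real.exp (-(β * f (φ s))))⁻¹ •
    ∫ s in (0:ℝ)..t, Real.exp (-(β * f (φ s))) • φ s

/-- `exp` is 1-Lipschitz on nonpositive reals. -/
lemma exp_lip_aux {a b : ℝ} (ha : a ≤ 0) (hb : b ≤ 0) :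
    |Real.exp a - Real.exp b| ≤ |a - b| := by
  wlog h : b ≤ a generalizing a b
  · rw [abs_sub_comm, abs_sub_comm a b]
    exact this hb ha (le_of_not_ge h)
  have h1 := Real.add_one_le_exp (b - a)
  have h2 : Real.exp b = Real.exp (b - a) * Real.exp a := by
    rw [← Real.exp_add]; ring_nf
  have h3 : Real.exp a ≤ 1 := Real.exp_le_one_iff.mpr ha
  have h4 : (0:ℝ) < Real.exp a := Real.exp_pos a
  have h5 : Real.exp b ≤ Real.exp a := Real.exp_le_exp.mpr h
  rw [abs_of_nonneg (by linarith), abs_of_nonneg (by linarith)]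
  nlinarith

theorem stmt_3 (d : ℕ) (hd : 1 ≤ d) (β n Lf : ℝ) (hβ : 0 < β) (hn : 0 < n) (hLf : 0 ≤ Lf)
    (f : EuclideanSpace ℝ (Fin d) → ℝ) (hf : Continuous f) (hfpos : ∀ x, 0 ≤ f x)
    (hfLip : ∀ x y : EuclideanSpace ℝ (Fin d), ‖x‖ ≤ n → ‖y‖ ≤ n →
      |f x - f y| ≤ Lf * ‖x - y‖) :
    ∃ C₁ > 0, ∀ (φ φ' : ℝ → EuclideanSpace ℝ (Fin d)),
      ContinuousOn φ (Set.Ici 0) → ContinuousOn φ' (Set.Ici 0) →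
      ∀ t : ℝ, 0 < t →
      (∀ s ∈ Set.Icc (0:ℝ) t, ‖φ s‖ ≤ n) → (∀ s ∈ Set.Icc (0:ℝ) t, ‖φ' s‖ ≤ n) →
      ‖personalBest β f φ t - personalBest β f φ' t‖ ≤
        C₁ * ⨆ s : Set.Icc (0:ℝ) t, ‖φ s.1 - φ' s.1‖ := by
  set M : ℝ := f 0 + Lf * n with hMdef
  have hM0 : 0 ≤ M := add_nonneg (hfpos 0) (mul_nonneg hLf hn.le)
  refine ⟨(Real.exp (β * M))^2 * (1 + 2 * β * Lf * n), by positivity, ?_⟩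
  intro φ φ' hφ hφ' t ht hφn hφ'n
  set Δ := ⨆ s : Set.Icc (0:ℝ) t, ‖φ s.1 - φ' s.1‖ with hΔdef
  have hne : Nonempty (Set.Icc (0:ℝ) t) := ⟨⟨0, le_refl 0, ht.le⟩⟩
  have hbdd : BddAbove (Set.range fun s : Set.Icc (0:ℝ) t => ‖φ s.1 - φ' s.1‖) := by
    refine ⟨2 * n, ?_⟩
    rintro x ⟨s, rfl⟩
    calc ‖φ s.1 - φ' s.1‖ ≤ ‖φ s.1‖ + ‖φ' s.1‖ := norm_sub_le _ _
      _ ≤ n + n := add_le_add (hφn s.1 s.2) (hφ'n s.1 s.2)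
      _ = 2 * n := by ring
  have hΔle : ∀ s ∈ Set.Icc (0:ℝ) t, ‖φ s - φ' s‖ ≤ Δ := fun s hs =>
    le_ciSup hbdd (⟨s, hs⟩ : Set.Icc (0:ℝ) t)
  have hΔ0 : 0 ≤ Δ := le_trans (norm_nonneg _) (hΔle 0 ⟨le_refl 0, ht.le⟩)
  -- bounds on f on the ball
  have hfub : ∀ x : EuclideanSpace ℝ (Fin d), ‖x‖ ≤ n → f x ≤ M := by
    intro x hx
    have h := hfLip x 0 hx (by simp [hn.le])
    rw [sub_zero] at h
    have := (abs_le.mp h).2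
    have hLn : Lf * ‖x‖ ≤ Lf * n := mul_le_mul_of_nonneg_left hx hLf
    simp only [hMdef]; linarith
  -- the weights
  set E : ℝ := Real.exp (-(β * M)) with hEdef
  have hE : 0 < E := Real.exp_pos _
  have hwlb : ∀ x : EuclideanSpace ℝ (Fin d), ‖x‖ ≤ n →
      E ≤ Real.exp (-(β * f x)) := fun x hx =>
    Real.exp_le_exp.mpr (by nlinarith [hfub x hx])
  have hwub : ∀ x : EuclideanSpace ℝ (Fin d), Real.exp (-(β * f x)) ≤ 1 :=
    fun x => Real.exp_le_one_iff.mpr (neg_nonpos.mpr (mul_nonneg hβ.le (hfpos x)))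
  -- continuity and integrability
  have hsub : Set.uIcc (0:ℝ) t ⊆ Set.Ici 0 := by
    rw [Set.uIcc_of_le ht.le]; exact fun s hs => hs.1
  have huIcc : Set.uIcc (0:ℝ) t = Set.Icc 0 t := Set.uIcc_of_le ht.le
  have huIoc : Set.uIoc (0:ℝ) t ⊆ Set.Icc 0 t := by
    rw [Set.uIoc_of_le ht.le]; exact Set.Ioc_subset_Icc_self
  have hφc : ContinuousOn φ (Set.uIcc 0 t) := hφ.mono hsub
  have hφ'c : ContinuousOn φ' (Set.uIcc 0 t) := hφ'.mono hsub
  have hwcont : Continuous (fun x : EuclideanSpace ℝ (Fin d) => Real.exp (-(β * f x))) :=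
    Real.continuous_exp.comp ((continuous_const.mul hf).neg)
  have cw : ContinuousOn (fun s => Real.exp (-(β * f (φ s)))) (Set.uIcc 0 t) :=
    hwcont.comp_continuousOn hφc
  have cw' : ContinuousOn (fun s => Real.exp (-(β * f (φ' s)))) (Set.uIcc 0 t) :=
    hwcont.comp_continuousOn hφ'c
  have iw : IntervalIntegrable (fun s => Real.exp (-(β * f (φ s)))) MeasureTheory.volume 0 t :=
    cw.intervalIntegrable
  have iw' : IntervalIntegrable (fun s => Real.exp (-(β * f (φ' s)))) MeasureTheory.volume 0 t :=
    cw'.intervalIntegrable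
  have iwφ : IntervalIntegrable (fun s => Real.exp (-(β * f (φ s))) • φ s)
      MeasureTheory.volume 0 t := (cw.smul hφc).intervalIntegrable
  have iwφ' : IntervalIntegrable (fun s => Real.exp (-(β * f (φ' s))) • φ' s)
      MeasureTheory.volume 0 t := (cw'.smul hφ'c).intervalIntegrable
  set I : ℝ := ∫ s in (0:ℝ)..t, Real.exp (-(β * f (φ s))) with hIdef
  set I' : ℝ := ∫ s in (0:ℝ)..t, Real.exp (-(β * f (φ' s))) with hI'def
  set J : EuclideanSpace ℝ (Fin d) := ∫ s in (0:ℝ)..t, Real.exp (-(β * f (φ s))) • φ s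
    with hJdef
  set J' : EuclideanSpace ℝ (Fin d) := ∫ s in (0:ℝ)..t, Real.exp (-(β * f (φ' s))) • φ' s
    with hJ'def
  -- lower bounds on I, I'
  have hIlb : t * E ≤ I := by
    have h := intervalIntegral.integral_mono_on ht.le intervalIntegrable_const iw
      (fun s hs => hwlb (φ s) (hφn s hs))
    simpa [smul_eq_mul, mul_comm] using h
  have hI'lb : t * E ≤ I' := by
    have h := intervalIntegral.integral_mono_on ht.le intervalIntegrable_const iw'
      (fun s hs => hwlb (φ' s) (hφ'n s hs))
    simpa [smul_eq_mul, mul_comm] using h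
  have htE : 0 < t * E := mul_pos ht hE
  have hI0 : 0 < I := lt_of_lt_of_le htE hIlb
  have hI'0 : 0 < I' := lt_of_lt_of_le htE hI'lb
  -- upper bound on I'
  have hI'ub : I' ≤ t := by
    have h := intervalIntegral.integral_mono_on ht.le iw' intervalIntegrable_const
      (fun s _ => hwub (φ' s))
    simpa [smul_eq_mul] using h
  -- bound on ‖J'‖
  have hJ'ub : ‖J'‖ ≤ n * t := by
    have h := intervalIntegral.norm_integral_le_of_norm_le_const (C := n)
      (f := fun s => Real.exp (-(β * f (φ' s))) • φ' s) (a := (0:ℝ)) (b := t) ?_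
    · calc ‖J'‖ ≤ n * |t - 0| := h
        _ = n * t := by rw [sub_zero, abs_of_pos ht]
    · intro s hs
      have hs' := huIoc hs
      rw [norm_smul, Real.norm_eq_abs, abs_of_pos (Real.exp_pos _)]
      calc Real.exp (-(β * f (φ' s))) * ‖φ' s‖ ≤ 1 * n :=
            mul_le_mul (hwub (φ' s)) (hφ'n s hs') (norm_nonneg _) one_pos.le
        _ = n := one_mul n
  -- pointwise bound on weight difference
  have hwd : ∀ s ∈ Set.Icc (0:ℝ) t,
      |Real.exp (-(β * f (φ s))) - Real.exp (-(β * f (φ' s)))| ≤ β * Lf * Δ := by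
    intro s hs
    have h1 : -(β * f (φ s)) ≤ 0 := neg_nonpos.mpr (mul_nonneg hβ.le (hfpos _))
    have h2 : -(β * f (φ' s)) ≤ 0 := neg_nonpos.mpr (mul_nonneg hβ.le (hfpos _))
    calc |Real.exp (-(β * f (φ s))) - Real.exp (-(β * f (φ' s)))|
        ≤ |(-(β * f (φ s))) - (-(β * f (φ' s)))| := exp_lip_aux h1 h2
      _ = β * |f (φ s) - f (φ' s)| := by
          have : (-(β * f (φ s))) - (-(β * f (φ' s))) = β * (f (φ' s) - f (φ s)) := by ring
          rw [this, abs_mul, abs_of_pos hβ, abs_sub_comm]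
      _ ≤ β * (Lf * ‖φ s - φ' s‖) :=
          mul_le_mul_of_nonneg_left (hfLip _ _ (hφn s hs) (hφ'n s hs)) hβ.le
      _ ≤ β * (Lf * Δ) :=
          mul_le_mul_of_nonneg_left (mul_le_mul_of_nonneg_left (hΔle s hs) hLf) hβ.le
      _ = β * Lf * Δ := by ring
  -- bound on |I' - I|
  have hdI : |I' - I| ≤ β * Lf * Δ * t := by
    have hint : I' - I = ∫ s in (0:ℝ)..t,
        (Real.exp (-(β * f (φ' s))) - Real.exp (-(β * f (φ s)))) :=
      (intervalIntegral.integral_sub iw' iw).symm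
    rw [hint]
    have h := intervalIntegral.norm_integral_le_of_norm_le_const (C := β * Lf * Δ)
      (f := fun s => Real.exp (-(β * f (φ' s))) - Real.exp (-(β * f (φ s))))
      (a := (0:ℝ)) (b := t) ?_
    · calc ‖∫ s in (0:ℝ)..t, (Real.exp (-(β * f (φ' s))) - Real.exp (-(β * f (φ s))))‖
          ≤ β * Lf * Δ * |t - 0| := h
        _ = β * Lf * Δ * t := by rw [sub_zero, abs_of_pos ht]
    · intro s hs
      rw [Real.norm_eq_abs, abs_sub_comm]
      exact hwd s (huIoc hs)
  -- bound on ‖J - J'‖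
  have hdJ : ‖J - J'‖ ≤ (1 + β * Lf * n) * Δ * t := by
    have hint : J - J' = ∫ s in (0:ℝ)..t,
        (Real.exp (-(β * f (φ s))) • φ s - Real.exp (-(β * f (φ' s))) • φ' s) :=
      (intervalIntegral.integral_sub iwφ iwφ').symm
    rw [hint]
    have h := intervalIntegral.norm_integral_le_of_norm_le_const (C := (1 + β * Lf * n) * Δ)
      (f := fun s => Real.exp (-(β * f (φ s))) • φ s - Real.exp (-(β * f (φ' s))) • φ' s)
      (a := (0:ℝ)) (b := t) ?_
    · calc ‖∫ s in (0:ℝ)..t,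
            (Real.exp (-(β * f (φ s))) • φ s - Real.exp (-(β * f (φ' s))) • φ' s)‖
          ≤ (1 + β * Lf * n) * Δ * |t - 0| := h
        _ = (1 + β * Lf * n) * Δ * t := by rw [sub_zero, abs_of_pos ht]
    · intro s hs
      have hs' := huIoc hs
      have key : Real.exp (-(β * f (φ s))) • φ s - Real.exp (-(β * f (φ' s))) • φ' s =
          Real.exp (-(β * f (φ s))) • (φ s - φ' s) +
          (Real.exp (-(β * f (φ s))) - Real.exp (-(β * f (φ' s)))) • φ' s := by
        rw [smul_sub, sub_smul]; abel
      show ‖Real.exp (-(β * f (φ s))) • φ s - Real.exp (-(β * f (φ' s))) • φ' s‖ ≤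
        (1 + β * Lf * n) * Δ
      rw [key]
      calc ‖Real.exp (-(β * f (φ s))) • (φ s - φ' s) +
            (Real.exp (-(β * f (φ s))) - Real.exp (-(β * f (φ' s)))) • φ' s‖
          ≤ ‖Real.exp (-(β * f (φ s))) • (φ s - φ' s)‖ +
            ‖(Real.exp (-(β * f (φ s))) - Real.exp (-(β * f (φ' s)))) • φ' s‖ :=
            norm_add_le _ _
        _ = Real.exp (-(β * f (φ s))) * ‖φ s - φ' s‖ +
            |Real.exp (-(β * f (φ s))) - Real.exp (-(β * f (φ' s)))| * ‖φ' s‖ := by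
            rw [norm_smul, norm_smul, Real.norm_eq_abs, Real.norm_eq_abs,
              abs_of_pos (Real.exp_pos _)]
        _ ≤ 1 * Δ + (β * Lf * Δ) * n := by
            refine add_le_add ?_ ?_
            · exact mul_le_mul (hwub _) (hΔle s hs') (norm_nonneg _) one_pos.le
            · exact mul_le_mul (hwd s hs') (hφ'n s hs') (norm_nonneg _)
                (by positivity)
        _ = (1 + β * Lf * n) * Δ := by ring
  -- now the main computation
  simp only [personalBest, if_neg ht.ne']
  rw [← hIdef, ← hI'def, ← hJdef, ← hJ'def]
  have hP : 0 < I * I' := mul_pos hI0 hI'0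
  have hkey : I⁻¹ • J - I'⁻¹ • J' =
      (I * I')⁻¹ • (I' • (J - J') + (I' - I) • J') := by
    have c1 : (I * I')⁻¹ * I' = I⁻¹ := by field_simp
    have c2 : (I * I')⁻¹ * (I' - I) = I⁻¹ - I'⁻¹ := by
      field_simp
    rw [smul_add, smul_smul, smul_smul, c1, c2, smul_sub, sub_smul]
    abel
  rw [hkey, norm_smul, Real.norm_eq_abs, abs_of_pos (inv_pos.mpr hP)]
  have hvb : ‖I' • (J - J') + (I' - I) • J'‖ ≤ Δ * t^2 * (1 + 2 * β * Lf * n) := by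
    calc ‖I' • (J - J') + (I' - I) • J'‖
        ≤ ‖I' • (J - J')‖ + ‖(I' - I) • J'‖ := norm_add_le _ _
      _ = I' * ‖J - J'‖ + |I' - I| * ‖J'‖ := by
          rw [norm_smul, norm_smul, Real.norm_eq_abs, Real.norm_eq_abs, abs_of_pos hI'0]
      _ ≤ t * ((1 + β * Lf * n) * Δ * t) + (β * Lf * Δ * t) * (n * t) := by
          refine add_le_add ?_ ?_
          · exact mul_le_mul hI'ub hdJ (norm_nonneg _) ht.le
          · exact mul_le_mul hdI hJ'ub (norm_nonneg _) (by positivity)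
      _ = Δ * t^2 * (1 + 2 * β * Lf * n) := by ring
  have hPlb : (t * E) * (t * E) ≤ I * I' :=
    mul_le_mul hIlb hI'lb htE.le hI0.le
  have hinv : (I * I')⁻¹ ≤ ((t * E) * (t * E))⁻¹ :=
    inv_anti₀ (by positivity) hPlb
  calc (I * I')⁻¹ * ‖I' • (J - J') + (I' - I) • J'‖
      ≤ (I * I')⁻¹ * (Δ * t^2 * (1 + 2 * β * Lf * n)) :=
        mul_le_mul_of_nonneg_left hvb (inv_pos.mpr hP).le
    _ ≤ ((t * E) * (t * E))⁻¹ * (Δ * t^2 * (1 + 2 * β * Lf * n)) :=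
        mul_le_mul_of_nonneg_right hinv (by positivity)
    _ = (Real.exp (β * M))^2 * (1 + 2 * β * Lf * n) * Δ := by
        have hE' : E = (Real.exp (β * M))⁻¹ := by rw [hEdef, Real.exp_neg]
        rw [hE']
        have h1 : Real.exp (β * M) ≠ 0 := (Real.exp_pos _).ne'
        field_simp
end

section
/- Let d, N ≥ 1, β > 0, n > 0, and let f : ℝ^d → ℝ be continuous with f ≥ 0 and Lipschitz continuous with constant L_f on B_n = {x ∈ ℝ^d : |x| ≤ n}. Then there exists a constant C > 0, depending only on β, n, L_f, and the infimum and supremum of f on B_n, such that for all continuous paths φ = (φ^1,…,φ^N), φ̂ = (φ̂^1,…,φ̂^N) : [0,∞) → (ℝ^d)^N with sup_{0≤s≤t}|φ^i(s)| ≤ n and sup_{0≤s≤t}|φ̂^i(s)| ≤ n for every i, one has ∑_{i=1}^N |p_f[φ^i](t) − p_f[φ̂^i](t)|² ≤ C ∑_{i=1}^N (sup_{0≤s≤t}|φ^i(s) − φ̂^i(s)|)² for all t > 0. -/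
open scoped BigOperators

lemma exp_neg_lip (a b : ℝ) (ha : 0 ≤ a) (hb : 0 ≤ b) :
    |Real.exp (-a) - Real.exp (-b)| ≤ |a - b| := by
  wlog h : b ≤ a generalizing a b
  · rw [abs_sub_comm, abs_sub_comm a b]; exact this b a hb ha (le_of_not_ge h)
  have hmono : Real.exp (-a) ≤ Real.exp (-b) := Real.exp_le_exp.2 (by linarith)
  rw [abs_of_nonpos (by linarith), abs_of_nonneg (by linarith), neg_sub]
  have hsplit : Real.exp (-b) - Real.exp (-a)
      = Real.exp (-b) * (1 - Real.exp (-(a - b))) := by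
    rw [mul_sub, mul_one, ← Real.exp_add]; ring_nf
  have h1 : Real.exp (-b) ≤ 1 := Real.exp_le_one_iff.2 (by linarith)
  have h2 : 1 - Real.exp (-(a - b)) ≤ a - b := by
    have := Real.add_one_le_exp (-(a - b)); linarith
  have h3 : 0 ≤ 1 - Real.exp (-(a - b)) := by
    have : Real.exp (-(a - b)) ≤ 1 := Real.exp_le_one_iff.2 (by linarith)
    linarith
  calc Real.exp (-b) - Real.exp (-a) = Real.exp (-b) * (1 - Real.exp (-(a - b))) := hsplit
    _ ≤ 1 * (1 - Real.exp (-(a - b))) := mul_le_mul_of_nonneg_right h1 h3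
    _ ≤ a - b := by linarith

lemma pb_key {d : ℕ} (β n Lf M : ℝ) (hβ : 0 < β) (hn : 0 < n) (hLf : 0 ≤ Lf)
    (f : EuclideanSpace ℝ (Fin d) → ℝ) (hf : Continuous f) (hfpos : ∀ x, 0 ≤ f x)
    (hM : ∀ x : EuclideanSpace ℝ (Fin d), ‖x‖ ≤ n → f x ≤ M)
    (hfLip : ∀ x y : EuclideanSpace ℝ (Fin d), ‖x‖ ≤ n → ‖y‖ ≤ n →
      |f x - f y| ≤ Lf * ‖x - y‖)
    (φ φ' : ℝ → EuclideanSpace ℝ (Fin d))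
    (hφ : ContinuousOn φ (Set.Ici 0)) (hφ' : ContinuousOn φ' (Set.Ici 0))
    (t : ℝ) (ht : 0 < t)
    (hφn : ∀ s ∈ Set.Icc (0:ℝ) t, ‖φ s‖ ≤ n)
    (hφ'n : ∀ s ∈ Set.Icc (0:ℝ) t, ‖φ' s‖ ≤ n)
    (D : ℝ) (hD : ∀ s ∈ Set.Icc (0:ℝ) t, ‖φ s - φ' s‖ ≤ D) :
    ‖personalBest β f φ t - personalBest β f φ' t‖ ≤
      Real.exp (β * M) * (1 + 2 * β * Lf * n) * D := by
  have hD0 : 0 ≤ D := le_trans (norm_nonneg _) (hD 0 ⟨le_refl 0, ht.le⟩)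
  have htIcc : Set.uIcc (0:ℝ) t = Set.Icc 0 t := Set.uIcc_of_le ht.le
  have hsub : Set.Icc (0:ℝ) t ⊆ Set.Ici 0 := fun s hs => hs.1
  set g : ℝ → ℝ := fun s => Real.exp (-(β * f (φ s))) with hg
  set g' : ℝ → ℝ := fun s => Real.exp (-(β * f (φ' s))) with hg'
  -- continuity
  have hφc : ContinuousOn φ (Set.Icc 0 t) := hφ.mono hsub
  have hφ'c : ContinuousOn φ' (Set.Icc 0 t) := hφ'.mono hsub
  have hgc : ContinuousOn g (Set.Icc 0 t) :=
    (Real.continuous_exp.comp (continuous_const.mul hf).neg).comp_continuousOn hφc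
  have hg'c : ContinuousOn g' (Set.Icc 0 t) :=
    (Real.continuous_exp.comp (continuous_const.mul hf).neg).comp_continuousOn hφ'c
  -- pointwise bounds on g
  have hM0 : 0 ≤ M := le_trans (hfpos (φ 0)) (hM _ (hφn 0 ⟨le_refl 0, ht.le⟩))
  have hg_le : ∀ s ∈ Set.Icc (0:ℝ) t, g s ≤ 1 := fun s hs =>
    Real.exp_le_one_iff.2 (by have := hfpos (φ s); nlinarith [hβ.le])
  have hg'_le : ∀ s ∈ Set.Icc (0:ℝ) t, g' s ≤ 1 := fun s hs =>
    Real.exp_le_one_iff.2 (by have := hfpos (φ' s); nlinarith [hβ.le])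
  have hg_ge : ∀ s ∈ Set.Icc (0:ℝ) t, Real.exp (-(β * M)) ≤ g s := fun s hs =>
    Real.exp_le_exp.2 (by have := hM _ (hφn s hs); nlinarith)
  have hg'_ge : ∀ s ∈ Set.Icc (0:ℝ) t, Real.exp (-(β * M)) ≤ g' s := fun s hs =>
    Real.exp_le_exp.2 (by have := hM _ (hφ'n s hs); nlinarith)
  have hgpos : ∀ s, 0 < g s := fun s => Real.exp_pos _
  have hg'pos : ∀ s, 0 < g' s := fun s => Real.exp_pos _
  -- integrability
  have hgi : IntervalIntegrable g MeasureTheory.volume 0 t :=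
    (hgc.mono (by rw [htIcc])).intervalIntegrable
  have hg'i : IntervalIntegrable g' MeasureTheory.volume 0 t :=
    (hg'c.mono (by rw [htIcc])).intervalIntegrable
  have hgφi : IntervalIntegrable (fun s => g s • φ s) MeasureTheory.volume 0 t :=
    ((hgc.smul hφc).mono (by rw [htIcc])).intervalIntegrable
  have hg'φ'i : IntervalIntegrable (fun s => g' s • φ' s) MeasureTheory.volume 0 t :=
    ((hg'c.smul hφ'c).mono (by rw [htIcc])).intervalIntegrable
  set A := ∫ s in (0:ℝ)..t, g s with hA
  set A' := ∫ s in (0:ℝ)..t, g' s with hA'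
  set B := ∫ s in (0:ℝ)..t, g s • φ s with hB
  set B' := ∫ s in (0:ℝ)..t, g' s • φ' s with hB'
  -- lower bounds on A, A'
  have hconsti : IntervalIntegrable (fun _ : ℝ => Real.exp (-(β * M)))
      MeasureTheory.volume 0 t := intervalIntegrable_const
  have hAge : t * Real.exp (-(β * M)) ≤ A := by
    have := intervalIntegral.integral_mono_on ht.le hconsti hgi hg_ge
    simpa using this
  have hA'ge : t * Real.exp (-(β * M)) ≤ A' := by
    have := intervalIntegral.integral_mono_on ht.le hconsti hg'i hg'_ge
    simpa using this
  have hApos : 0 < A := lt_of_lt_of_le (by positivity) hAge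
  have hA'pos : 0 < A' := lt_of_lt_of_le (by positivity) hA'ge
  -- |g - g'| bound
  have hgg' : ∀ s ∈ Set.Icc (0:ℝ) t, |g s - g' s| ≤ β * Lf * D := by
    intro s hs
    have h1 : |g s - g' s| ≤ |β * f (φ s) - β * f (φ' s)| :=
      exp_neg_lip _ _ (by nlinarith [hfpos (φ s), hβ.le]) (by nlinarith [hfpos (φ' s), hβ.le])
    have h2 : |β * f (φ s) - β * f (φ' s)| = β * |f (φ s) - f (φ' s)| := by
      rw [← mul_sub, abs_mul, abs_of_pos hβ]
    have h3 : |f (φ s) - f (φ' s)| ≤ Lf * ‖φ s - φ' s‖ :=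
      hfLip _ _ (hφn s hs) (hφ'n s hs)
    have h4 : ‖φ s - φ' s‖ ≤ D := hD s hs
    calc |g s - g' s| ≤ β * |f (φ s) - f (φ' s)| := by rw [← h2]; exact h1
      _ ≤ β * (Lf * D) := by
          have h5 : |f (φ s) - f (φ' s)| ≤ Lf * D :=
            le_trans h3 (mul_le_mul_of_nonneg_left h4 hLf)
          exact mul_le_mul_of_nonneg_left h5 hβ.le
      _ = β * Lf * D := by ring
  -- |A - A'| bound
  have hAA' : |A - A'| ≤ t * (β * Lf * D) := by
    rw [hA, hA', ← intervalIntegral.integral_sub hgi hg'i]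
    calc |∫ s in (0:ℝ)..t, (g s - g' s)| ≤ ∫ s in (0:ℝ)..t, |g s - g' s| := by
          simpa using intervalIntegral.norm_integral_le_integral_norm (f := fun s => g s - g' s) ht.le
      _ ≤ ∫ _ in (0:ℝ)..t, β * Lf * D := by
          apply intervalIntegral.integral_mono_on ht.le _ intervalIntegrable_const hgg'
          exact ((hgc.sub hg'c).abs.mono (by rw [htIcc])).intervalIntegrable
      _ = t * (β * Lf * D) := by
          rw [intervalIntegral.integral_const, smul_eq_mul, sub_zero]
  -- ‖B - B'‖ bound
  have hBB' : ‖B - B'‖ ≤ t * (D + β * Lf * D * n) := by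
    rw [hB, hB', ← intervalIntegral.integral_sub hgφi hg'φ'i]
    calc ‖∫ s in (0:ℝ)..t, (g s • φ s - g' s • φ' s)‖
        ≤ ∫ s in (0:ℝ)..t, ‖g s • φ s - g' s • φ' s‖ :=
          intervalIntegral.norm_integral_le_integral_norm ht.le
      _ ≤ ∫ _ in (0:ℝ)..t, (D + β * Lf * D * n) := by
          apply intervalIntegral.integral_mono_on ht.le _ intervalIntegrable_const
          · intro s hs
            have key : g s • φ s - g' s • φ' s
                = g s • (φ s - φ' s) + (g s - g' s) • φ' s := by
              rw [smul_sub, sub_smul]; abel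
            calc ‖g s • φ s - g' s • φ' s‖
                ≤ ‖g s • (φ s - φ' s)‖ + ‖(g s - g' s) • φ' s‖ := by
                  rw [key]; exact norm_add_le _ _
              _ = g s * ‖φ s - φ' s‖ + |g s - g' s| * ‖φ' s‖ := by
                  rw [norm_smul, norm_smul, Real.norm_eq_abs, Real.norm_eq_abs,
                    abs_of_pos (hgpos s)]
              _ ≤ 1 * D + (β * Lf * D) * n := by
                  have := hg_le s hs; have := hgg' s hs; have := hD s hs
                  have := hφ'n s hs
                  gcongr <;> first
                    | exact hg_le s hs | exact hD s hs | exact hgg' s hs | exact hφ'n s hs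
              _ = D + β * Lf * D * n := by ring
          · exact (((hgc.smul hφc).sub (hg'c.smul hφ'c)).norm.mono
              (by rw [htIcc])).intervalIntegrable
      _ = t * (D + β * Lf * D * n) := by
          rw [intervalIntegral.integral_const, smul_eq_mul, sub_zero]
  -- ‖B'‖ bound
  have hB'le : ‖B'‖ ≤ n * A' := by
    calc ‖B'‖ ≤ ∫ s in (0:ℝ)..t, ‖g' s • φ' s‖ :=
          intervalIntegral.norm_integral_le_integral_norm ht.le
      _ ≤ ∫ s in (0:ℝ)..t, n * g' s := by
          apply intervalIntegral.integral_mono_on ht.le _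
            (hg'i.const_mul n)
          · intro s hs
            rw [norm_smul, Real.norm_eq_abs, abs_of_pos (hg'pos s), mul_comm]
            exact mul_le_mul_of_nonneg_right (hφ'n s hs) (hg'pos s).le
          · exact (((hg'c.smul hφ'c).norm).mono (by rw [htIcc])).intervalIntegrable
      _ = n * A' := by rw [intervalIntegral.integral_const_mul]
  -- main decomposition
  have hpb : personalBest β f φ t - personalBest β f φ' t
      = A⁻¹ • (B - B') + (A⁻¹ - A'⁻¹) • B' := by
    rw [personalBest, personalBest, if_neg ht.ne', if_neg ht.ne']
    rw [smul_sub, sub_smul]; abel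
  have ht' : (0:ℝ) < t * Real.exp (-(β*M)) := by positivity
  have hAinv : A⁻¹ ≤ Real.exp (β * M) / t :=
    calc A⁻¹ ≤ (t * Real.exp (-(β*M)))⁻¹ := inv_anti₀ ht' hAge
      _ = Real.exp (β * M) / t := by
          rw [mul_inv, Real.exp_neg, inv_inv, div_eq_inv_mul]
  have hinvdiff : |A⁻¹ - A'⁻¹| ≤ t * (β * Lf * D) / (A * A') := by
    rw [inv_sub_inv hApos.ne' hA'pos.ne', abs_div, abs_of_pos (mul_pos hApos hA'pos)]
    have : |A' - A| ≤ t * (β * Lf * D) := by rw [abs_sub_comm]; exact hAA'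
    gcongr
  have hterm1 : ‖A⁻¹ • (B - B')‖ ≤ (Real.exp (β * M) / t) * (t * (D + β * Lf * D * n)) := by
    rw [norm_smul, Real.norm_eq_abs, abs_of_pos (inv_pos.2 hApos)]
    exact mul_le_mul hAinv hBB' (norm_nonneg _) (by positivity)
  have hterm2 : ‖(A⁻¹ - A'⁻¹) • B'‖ ≤ Real.exp (β * M) * (β * Lf * D * n) := by
    rw [norm_smul, Real.norm_eq_abs]
    calc |A⁻¹ - A'⁻¹| * ‖B'‖
        ≤ (t * (β * Lf * D) / (A * A')) * (n * A') :=
          mul_le_mul hinvdiff hB'le (norm_nonneg _) (by positivity)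
      _ = (t * (β * Lf * D) * n) * A⁻¹ := by field_simp
      _ ≤ (t * (β * Lf * D) * n) * (Real.exp (β * M) / t) := by
          exact mul_le_mul_of_nonneg_left hAinv (by positivity)
      _ = Real.exp (β * M) * (β * Lf * D * n) := by field_simp
  calc ‖personalBest β f φ t - personalBest β f φ' t‖
      = ‖A⁻¹ • (B - B') + (A⁻¹ - A'⁻¹) • B'‖ := by rw [hpb]
    _ ≤ ‖A⁻¹ • (B - B')‖ + ‖(A⁻¹ - A'⁻¹) • B'‖ := norm_add_le _ _
    _ ≤ (Real.exp (β * M) / t) * (t * (D + β * Lf * D * n))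
        + Real.exp (β * M) * (β * Lf * D * n) := add_le_add hterm1 hterm2
    _ = Real.exp (β * M) * (1 + 2 * β * Lf * n) * D := by field_simp; ring
theorem stmt_4 (d N : ℕ) (hd : 1 ≤ d) (hN : 1 ≤ N)
    (β n Lf : ℝ) (hβ : 0 < β) (hn : 0 < n) (hLf : 0 ≤ Lf)
    (f : EuclideanSpace ℝ (Fin d) → ℝ) (hf : Continuous f) (hfpos : ∀ x, 0 ≤ f x)
    (hfLip : ∀ x y : EuclideanSpace ℝ (Fin d), ‖x‖ ≤ n → ‖y‖ ≤ n →
      |f x - f y| ≤ Lf * ‖x - y‖) :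
    ∃ C > 0, ∀ (φ φ' : Fin N → ℝ → EuclideanSpace ℝ (Fin d)),
      (∀ i, ContinuousOn (φ i) (Set.Ici 0)) → (∀ i, ContinuousOn (φ' i) (Set.Ici 0)) →
      ∀ t : ℝ, 0 < t →
      (∀ i, ∀ s ∈ Set.Icc (0:ℝ) t, ‖φ i s‖ ≤ n) →
      (∀ i, ∀ s ∈ Set.Icc (0:ℝ) t, ‖φ' i s‖ ≤ n) →
      ∑ i, ‖personalBest β f (φ i) t - personalBest β f (φ' i) t‖ ^ 2 ≤
        C * ∑ i, (⨆ s : Set.Icc (0:ℝ) t, ‖φ i s.1 - φ' i s.1‖) ^ 2 := by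
  obtain ⟨x0, -, hx0⟩ := (isCompact_closedBall (0 : EuclideanSpace ℝ (Fin d)) n).exists_isMaxOn
    ⟨0, by simp [hn.le]⟩ hf.continuousOn
  set M := f x0 with hMdef
  have hM : ∀ x : EuclideanSpace ℝ (Fin d), ‖x‖ ≤ n → f x ≤ M := by
    intro x hx
    exact hx0 (by simpa [Metric.mem_closedBall, dist_eq_norm] using hx)
  set K := Real.exp (β * M) * (1 + 2 * β * Lf * n) with hKdef
  have hKpos : 0 < K := by
    have : (0:ℝ) < 1 + 2 * β * Lf * n := by positivity
    positivity
  refine ⟨K ^ 2, by positivity, ?_⟩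
  intro φ φ' hφ hφ' t ht hφn hφ'n
  rw [Finset.mul_sum]
  apply Finset.sum_le_sum
  intro i _
  set D := ⨆ s : Set.Icc (0:ℝ) t, ‖φ i s.1 - φ' i s.1‖ with hDdef
  have hbdd : BddAbove (Set.range fun s : Set.Icc (0:ℝ) t => ‖φ i s.1 - φ' i s.1‖) := by
    refine ⟨2 * n, ?_⟩
    rintro x ⟨s, rfl⟩
    calc ‖φ i s.1 - φ' i s.1‖ ≤ ‖φ i s.1‖ + ‖φ' i s.1‖ := norm_sub_le _ _
      _ ≤ n + n := add_le_add (hφn i s.1 s.2) (hφ'n i s.1 s.2)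
      _ = 2 * n := by ring
  have hD : ∀ s ∈ Set.Icc (0:ℝ) t, ‖φ i s - φ' i s‖ ≤ D := fun s hs =>
    le_ciSup hbdd (⟨s, hs⟩ : Set.Icc (0:ℝ) t)
  have hD0 : 0 ≤ D := le_trans (norm_nonneg _) (hD 0 ⟨le_refl 0, ht.le⟩)
  have hkey := pb_key β n Lf M hβ hn hLf f hf hfpos hM hfLip (φ i) (φ' i)
    (hφ i) (hφ' i) t ht (hφn i) (hφ'n i) D hD
  calc ‖personalBest β f (φ i) t - personalBest β f (φ' i) t‖ ^ 2
      ≤ (K * D) ^ 2 := pow_le_pow_left₀ (norm_nonneg _) hkey 2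
    _ = K ^ 2 * D ^ 2 := by ring
end

section
/- Let d, N ≥ 1, α > 0, n > 0, and let f : ℝ^d → ℝ be continuous with f ≥ 0 and Lipschitz continuous with constant L_f on B_n = {x ∈ ℝ^d : |x| ≤ n}. Then there exists a constant C > 0, depending only on α, n, N, L_f, and the infimum and supremum of f on B_n, such that for all x = (x^1,…,x^N), x̂ = (x̂^1,…,x̂^N) ∈ (ℝ^d)^N with |x^i| ≤ n and |x̂^i| ≤ n for every i, one has |v_f[x] − v_f[x̂]| ≤ C ∑_{i=1}^N |x^i − x̂^i|. -/
set_option maxHeartbeats 800000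


open scoped BigOperators

/-- The weighted average `v_f[x]` used in consensus-based optimization. -/
noncomputable def weightedAvg {d N : ℕ} (α : ℝ) (f : EuclideanSpace ℝ (Fin d) → ℝ)
    (x : Fin N → EuclideanSpace ℝ (Fin d)) : EuclideanSpace ℝ (Fin d) :=
  (∑ i, Real.exp (-(α * f (x i))))⁻¹ • ∑ i, Real.exp (-(α * f (x i))) • x i

lemma exp_neg_lipschitz {a b : ℝ} (ha : 0 ≤ a) (hb : 0 ≤ b) :
    |Real.exp (-a) - Real.exp (-b)| ≤ |a - b| := by
  wlog h : a ≤ b generalizing a b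
  · rw [abs_sub_comm, abs_sub_comm a b]; exact this hb ha (le_of_not_ge h)
  have h1 : Real.exp (-b) ≤ Real.exp (-a) := Real.exp_le_exp.2 (by linarith)
  rw [abs_of_nonneg (by linarith), abs_of_nonpos (by linarith)]
  have h2 : Real.exp (-b) = Real.exp (-a) * Real.exp (a - b) := by
    rw [← Real.exp_add]; ring_nf
  have h3 : (a - b) + 1 ≤ Real.exp (a - b) := Real.add_one_le_exp _
  have h4 : Real.exp (-a) ≤ 1 := Real.exp_le_one_iff.2 (by linarith)
  nlinarith [Real.exp_pos (-a)]

theorem stmt_5 (d N : ℕ) (hd : 1 ≤ d) (hN : 1 ≤ N)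
    (α n Lf : ℝ) (hα : 0 < α) (hn : 0 < n) (hLf : 0 ≤ Lf)
    (f : EuclideanSpace ℝ (Fin d) → ℝ) (hf : Continuous f) (hfpos : ∀ x, 0 ≤ f x)
    (hfLip : ∀ x y : EuclideanSpace ℝ (Fin d), ‖x‖ ≤ n → ‖y‖ ≤ n →
      |f x - f y| ≤ Lf * ‖x - y‖) :
    ∃ C > 0, ∀ x x' : Fin N → EuclideanSpace ℝ (Fin d),
      (∀ i, ‖x i‖ ≤ n) → (∀ i, ‖x' i‖ ≤ n) →
      ‖weightedAvg α f x - weightedAvg α f x'‖ ≤ C * ∑ i, ‖x i - x' i‖ := by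
  set M := f 0 + Lf * n with hMdef
  have hM0 : 0 ≤ M := by have := hfpos 0; nlinarith
  set ε := Real.exp (-(α * M)) with hεdef
  have hε0 : 0 < ε := Real.exp_pos _
  refine ⟨(1 + α * Lf * n) / ε + α * Lf * N * n / ε ^ 2, ?_, ?_⟩
  · have h1 : 0 < (1 + α * Lf * n) / ε := by positivity
    have h2 : 0 ≤ α * Lf * N * n / ε ^ 2 := by positivity
    linarith
  intro x x' hx hx'
  -- upper bound for f on the ball
  have hfub : ∀ z : EuclideanSpace ℝ (Fin d), ‖z‖ ≤ n → f z ≤ M := by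
    intro z hz
    have h1 : |f z - f 0| ≤ Lf * ‖z - 0‖ := hfLip z 0 hz (by simp [hn.le])
    rw [sub_zero] at h1
    have h2 := (abs_le.1 h1).2
    have h3 : Lf * ‖z‖ ≤ Lf * n := by nlinarith [norm_nonneg z]
    simp only [hMdef]; linarith
  set w : Fin N → ℝ := fun i => Real.exp (-(α * f (x i))) with hwdef
  set w' : Fin N → ℝ := fun i => Real.exp (-(α * f (x' i))) with hw'def
  have hwlb : ∀ i, ε ≤ w i := fun i =>
    Real.exp_le_exp.2 (by nlinarith [hfub (x i) (hx i)])
  have hw'lb : ∀ i, ε ≤ w' i := fun i =>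
    Real.exp_le_exp.2 (by nlinarith [hfub (x' i) (hx' i)])
  have hwub : ∀ i, w i ≤ 1 := fun i =>
    Real.exp_le_one_iff.2 (by nlinarith [hfpos (x i)])
  have hw'ub : ∀ i, w' i ≤ 1 := fun i =>
    Real.exp_le_one_iff.2 (by nlinarith [hfpos (x' i)])
  have hwlip : ∀ i, |w i - w' i| ≤ α * Lf * ‖x i - x' i‖ := by
    intro i
    have h1 : |w i - w' i| ≤ |α * f (x i) - α * f (x' i)| :=
      exp_neg_lipschitz (mul_nonneg hα.le (hfpos _)) (mul_nonneg hα.le (hfpos _))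
    have h2 : |α * f (x i) - α * f (x' i)| = α * |f (x i) - f (x' i)| := by
      rw [← mul_sub, abs_mul, abs_of_pos hα]
    have h3 := hfLip (x i) (x' i) (hx i) (hx' i)
    calc |w i - w' i| ≤ α * |f (x i) - f (x' i)| := by rw [← h2]; exact h1
      _ ≤ α * (Lf * ‖x i - x' i‖) := by nlinarith
      _ = α * Lf * ‖x i - x' i‖ := by ring
  set S := ∑ i, w i with hSdef
  set S' := ∑ i, w' i with hS'def
  set A := ∑ i, w i • x i with hAdef
  set A' := ∑ i, w' i • x' i with hA'def
  set D := ∑ i, ‖x i - x' i‖ with hDdef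
  have hD0 : 0 ≤ D := Finset.sum_nonneg fun i _ => norm_nonneg _
  have hcard : (Finset.univ : Finset (Fin N)).card = N := by simp
  have hSlb : ε ≤ S := by
    have h1 : ((Finset.univ : Finset (Fin N)).card : ℝ) * ε ≤ S :=
      by simpa using Finset.card_nsmul_le_sum Finset.univ w ε (fun i _ => hwlb i)
    rw [hcard] at h1
    have : (1 : ℝ) ≤ (N : ℝ) := by exact_mod_cast hN
    nlinarith
  have hS'lb : ε ≤ S' := by
    have h1 : ((Finset.univ : Finset (Fin N)).card : ℝ) * ε ≤ S' :=
      by simpa using Finset.card_nsmul_le_sum Finset.univ w' ε (fun i _ => hw'lb i)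
    rw [hcard] at h1
    have : (1 : ℝ) ≤ (N : ℝ) := by exact_mod_cast hN
    nlinarith
  have hS0 : 0 < S := lt_of_lt_of_le hε0 hSlb
  have hS'0 : 0 < S' := lt_of_lt_of_le hε0 hS'lb
  -- |S - S'| ≤ α Lf D
  have hSdiff : |S - S'| ≤ α * Lf * D := by
    have h1 : S - S' = ∑ i, (w i - w' i) := by
      rw [hSdef, hS'def, ← Finset.sum_sub_distrib]
    rw [h1]
    calc |∑ i, (w i - w' i)| ≤ ∑ i, |w i - w' i| := Finset.abs_sum_le_sum_abs _ _
      _ ≤ ∑ i, α * Lf * ‖x i - x' i‖ := Finset.sum_le_sum fun i _ => hwlip i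
      _ = α * Lf * D := by rw [hDdef, Finset.mul_sum]
  -- ‖A - A'‖ ≤ (1 + α Lf n) D
  have hAdiff : ‖A - A'‖ ≤ (1 + α * Lf * n) * D := by
    have h1 : A - A' = ∑ i, (w i • x i - w' i • x' i) := by
      rw [hAdef, hA'def, ← Finset.sum_sub_distrib]
    rw [h1]
    calc ‖∑ i, (w i • x i - w' i • x' i)‖ ≤ ∑ i, ‖w i • x i - w' i • x' i‖ :=
          norm_sum_le _ _
      _ ≤ ∑ i, (1 + α * Lf * n) * ‖x i - x' i‖ := by
          refine Finset.sum_le_sum fun i _ => ?_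
          have hdec : w i • x i - w' i • x' i
              = w i • (x i - x' i) + (w i - w' i) • x' i := by
            rw [smul_sub, sub_smul]; abel
          rw [hdec]
          calc ‖w i • (x i - x' i) + (w i - w' i) • x' i‖
              ≤ ‖w i • (x i - x' i)‖ + ‖(w i - w' i) • x' i‖ := norm_add_le _ _
            _ = |w i| * ‖x i - x' i‖ + |w i - w' i| * ‖x' i‖ := by
                rw [norm_smul, norm_smul, Real.norm_eq_abs, Real.norm_eq_abs]
            _ ≤ 1 * ‖x i - x' i‖ + (α * Lf * ‖x i - x' i‖) * n := by
                have hwa : |w i| ≤ 1 := by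
                  rw [abs_of_pos (lt_of_lt_of_le hε0 (hwlb i))]; exact hwub i
                have := hwlip i
                have h3 := hx' i
                have h4 := abs_nonneg (w i - w' i)
                nlinarith [norm_nonneg (x i - x' i), norm_nonneg (x' i)]
            _ = (1 + α * Lf * n) * ‖x i - x' i‖ := by ring
      _ = (1 + α * Lf * n) * D := by rw [hDdef, Finset.mul_sum]
  -- ‖A'‖ ≤ N * n
  have hA'bd : ‖A'‖ ≤ (N : ℝ) * n := by
    calc ‖A'‖ ≤ ∑ i, ‖w' i • x' i‖ := norm_sum_le _ _
      _ ≤ ∑ i, n := by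
          refine Finset.sum_le_sum fun i _ => ?_
          rw [norm_smul, Real.norm_eq_abs,
            abs_of_pos (lt_of_lt_of_le hε0 (hw'lb i))]
          nlinarith [hw'ub i, hw'lb i, hx' i, norm_nonneg (x' i)]
      _ = (N : ℝ) * n := by simp [hcard]
  -- inverse difference
  have hinv : |S⁻¹ - S'⁻¹| ≤ α * Lf * D / ε ^ 2 := by
    rw [inv_sub_inv hS0.ne' hS'0.ne', abs_div, abs_of_pos (mul_pos hS0 hS'0)]
    have hnum : |S' - S| ≤ α * Lf * D := by rw [abs_sub_comm]; exact hSdiff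
    have hden : ε ^ 2 ≤ S * S' := by nlinarith
    exact div_le_div₀ (by positivity) hnum (by positivity) hden
  -- main decomposition
  have hkey : weightedAvg α f x - weightedAvg α f x'
      = S⁻¹ • (A - A') + (S⁻¹ - S'⁻¹) • A' := by
    show S⁻¹ • A - S'⁻¹ • A' = _
    rw [smul_sub, sub_smul]; abel
  rw [hkey]
  have hSinv : S⁻¹ ≤ ε⁻¹ := inv_anti₀ hε0 hSlb
  calc ‖S⁻¹ • (A - A') + (S⁻¹ - S'⁻¹) • A'‖
      ≤ ‖S⁻¹ • (A - A')‖ + ‖(S⁻¹ - S'⁻¹) • A'‖ := norm_add_le _ _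
    _ = S⁻¹ * ‖A - A'‖ + |S⁻¹ - S'⁻¹| * ‖A'‖ := by
        rw [norm_smul, norm_smul, Real.norm_eq_abs, Real.norm_eq_abs,
          abs_of_pos (inv_pos.2 hS0)]
    _ ≤ ε⁻¹ * ((1 + α * Lf * n) * D) + (α * Lf * D / ε ^ 2) * ((N : ℝ) * n) := by
        have h1 : S⁻¹ * ‖A - A'‖ ≤ ε⁻¹ * ((1 + α * Lf * n) * D) :=
          mul_le_mul hSinv hAdiff (norm_nonneg _) (by positivity)
        have h2 : |S⁻¹ - S'⁻¹| * ‖A'‖ ≤ (α * Lf * D / ε ^ 2) * ((N : ℝ) * n) :=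
          mul_le_mul hinv hA'bd (norm_nonneg _) (by positivity)
        linarith
    _ = ((1 + α * Lf * n) / ε + α * Lf * (N : ℝ) * n / ε ^ 2) * D := by
        field_simp
end

section
/- Let d, N ≥ 1, α, β, ε > 0, let f : ℝ^d → ℝ be continuous, nonnegative, and Lipschitz continuous on every ball B_n = {x : |x| ≤ n} with constant L_f = L_f(n), and let H^ε : ℝ → ℝ satisfy 0 ≤ H^ε ≤ 1 and |H^ε(x) − H^ε(y)| ≤ (C/ε)|x − y| for some C > 0. Define, for a continuous path φ : [0,∞) → (ℝ^d)^N, the coefficients λ^{ε,i}(t,φ) = H^ε(f(φ^i(t)) − f(v_f[φ(t)])) · H^ε(f(p_f[φ^i](t)) − f(v_f[φ(t)])) and μ^{ε,i}(t,φ) = H^ε(f(φ^i(t)) − f(p_f[φ^i](t))) · H^ε(f(v_f[φ(t)]) − f(p_f[φ^i](t))), and the drift b(t,φ) ∈ (ℝ^d)^N blockwise by b^i(t,φ) = −λ^{ε,i}(t,φ)(φ^i(t) − v_f[φ(t)]) − μ^{ε,i}(t,φ)(φ^i(t) − p_f[φ^i](t)). Then for every R > 0 there exists a constant L_R > 0 (depending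 on d, N, α, β, ε, C, R, L_f(R), and the extrema of f on B_R) such that for all t ≥ 0 and all continuous φ, ψ : [0,∞) → (ℝ^d)^N with ‖φ‖_t ≤ R and ‖ψ‖_t ≤ R one has |b(t,φ) − b(t,ψ)| ≤ L_R ‖φ − ψ‖_t, where ‖φ‖_t = sup_{0≤s≤t}|φ(s)|. -/
open scoped BigOperators

/-- The smoothed coefficient `λ^{ε,i}(t,φ)`. -/
noncomputable def lamEps {d N : ℕ} (α β : ℝ) (f : EuclideanSpace ℝ (Fin d) → ℝ)
    (He : ℝ → ℝ) (i : Fin N) (t : ℝ) (φ : ℝ → Fin N → EuclideanSpace ℝ (Fin d)) : ℝ :=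
  He (f (φ t i) - f (weightedAvg α f (φ t))) *
    He (f (personalBest β f (fun s => φ s i) t) - f (weightedAvg α f (φ t)))

/-- The smoothed coefficient `μ^{ε,i}(t,φ)`. -/
noncomputable def muEps {d N : ℕ} (α β : ℝ) (f : EuclideanSpace ℝ (Fin d) → ℝ)
    (He : ℝ → ℝ) (i : Fin N) (t : ℝ) (φ : ℝ → Fin N → EuclideanSpace ℝ (Fin d)) : ℝ :=
  He (f (φ t i) - f (personalBest β f (fun s => φ s i) t)) *
    He (f (weightedAvg α f (φ t)) - f (personalBest β f (fun s => φ s i) t))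

/-- The `i`-th block of the drift `b(t,φ)`. -/
noncomputable def driftB {d N : ℕ} (α β : ℝ) (f : EuclideanSpace ℝ (Fin d) → ℝ)
    (He : ℝ → ℝ) (i : Fin N) (t : ℝ) (φ : ℝ → Fin N → EuclideanSpace ℝ (Fin d)) :
    EuclideanSpace ℝ (Fin d) :=
  -(lamEps α β f He i t φ) • (φ t i - weightedAvg α f (φ t))
    - (muEps α β f He i t φ) • (φ t i - personalBest β f (fun s => φ s i) t)



open scoped BigOperators

lemma exp_lip {u v : ℝ} (hu : u ≤ 0) (hv : v ≤ 0) :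
    |Real.exp u - Real.exp v| ≤ |u - v| := by
  wlog h : v ≤ u generalizing u v
  · rw [abs_sub_comm, abs_sub_comm u v]; exact this hv hu (le_of_not_ge h)
  have h1 : v - u + 1 ≤ Real.exp (v - u) := Real.add_one_le_exp _
  have h2 : Real.exp (v - u) * Real.exp u = Real.exp v := by
    rw [← Real.exp_add]; ring_nf
  have h3 : Real.exp u ≤ 1 := Real.exp_le_one_iff.mpr hu
  have h4 : (0:ℝ) < Real.exp u := Real.exp_pos u
  have h5 : Real.exp v ≤ Real.exp u := Real.exp_le_exp.2 h
  rw [abs_of_nonneg (by linarith), abs_of_nonneg (by linarith)]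
  nlinarith

lemma norm_le_sqrt_sum {d N : ℕ} (x : Fin N → EuclideanSpace ℝ (Fin d)) (i : Fin N) :
    ‖x i‖ ≤ Real.sqrt (∑ j, ‖x j‖ ^ 2) := by
  rw [show ‖x i‖ = Real.sqrt (‖x i‖ ^ 2) by rw [Real.sqrt_sq (norm_nonneg _)]]
  exact Real.sqrt_le_sqrt (Finset.single_le_sum (f := fun j => ‖x j‖ ^ 2) (fun j _ => by positivity) (Finset.mem_univ i))

/-- Abstract quotient Lipschitz bound. -/
lemma quot_lip {E : Type*} [NormedAddCommGroup E] [NormedSpace ℝ E]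
    {Sx Sy s A A' B : ℝ} {Tx Ty : E} (hs : 0 < s)
    (hSx : s ≤ Sx) (hSy : s ≤ Sy) (hTy : ‖Ty‖ ≤ B) (hT : ‖Tx - Ty‖ ≤ A)
    (hS : |Sx - Sy| ≤ A') :
    ‖Sx⁻¹ • Tx - Sy⁻¹ • Ty‖ ≤ A / s + A' * B / s ^ 2 := by
  have hSx0 : 0 < Sx := lt_of_lt_of_le hs hSx
  have hSy0 : 0 < Sy := lt_of_lt_of_le hs hSy
  have hA : 0 ≤ A := le_trans (norm_nonneg _) hT
  have hA' : 0 ≤ A' := le_trans (abs_nonneg _) hS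
  have hB : 0 ≤ B := le_trans (norm_nonneg _) hTy
  have hdecomp : Sx⁻¹ • Tx - Sy⁻¹ • Ty
      = Sx⁻¹ • (Tx - Ty) + (Sx⁻¹ - Sy⁻¹) • Ty := by
    rw [smul_sub, sub_smul]; abel
  have h1 : Sx⁻¹ ≤ s⁻¹ := inv_anti₀ hs hSx
  have h2 : |Sx⁻¹ - Sy⁻¹| ≤ A' / s ^ 2 := by
    have heq : Sx⁻¹ - Sy⁻¹ = (Sy - Sx) / (Sx * Sy) := by
      field_simp
    rw [heq, abs_div, abs_of_pos (mul_pos hSx0 hSy0)]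
    apply div_le_div₀ hA' (by rwa [abs_sub_comm]) (by positivity)
    calc s ^ 2 = s * s := sq s
    _ ≤ Sx * Sy := mul_le_mul hSx hSy hs.le hSx0.le
  calc ‖Sx⁻¹ • Tx - Sy⁻¹ • Ty‖
      ≤ ‖Sx⁻¹ • (Tx - Ty)‖ + ‖(Sx⁻¹ - Sy⁻¹) • Ty‖ := by rw [hdecomp]; exact norm_add_le _ _
    _ = Sx⁻¹ * ‖Tx - Ty‖ + |Sx⁻¹ - Sy⁻¹| * ‖Ty‖ := by
        rw [norm_smul, norm_smul, Real.norm_eq_abs, Real.norm_eq_abs,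
          abs_of_pos (inv_pos.2 hSx0)]
    _ ≤ s⁻¹ * A + (A' / s ^ 2) * B := by
        gcongr
    _ = A / s + A' * B / s ^ 2 := by ring

lemma He_prod {He : ℝ → ℝ} {K : ℝ} (h01 : ∀ x, 0 ≤ He x ∧ He x ≤ 1)
    (hLip : ∀ x y : ℝ, |He x - He y| ≤ K * |x - y|) (a b a' b' : ℝ) :
    |He a * He b - He a' * He b'| ≤ K * |a - a'| + K * |b - b'| := by
  have habs : ∀ x, |He x| ≤ 1 := fun x => abs_le.2 ⟨by linarith [(h01 x).1], (h01 x).2⟩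
  have heq : He a * He b - He a' * He b'
      = (He a - He a') * He b + He a' * (He b - He b') := by ring
  calc |He a * He b - He a' * He b'|
      ≤ |(He a - He a') * He b| + |He a' * (He b - He b')| := by rw [heq]; exact abs_add_le _ _
    _ = |He a - He a'| * |He b| + |He a'| * |He b - He b'| := by rw [abs_mul, abs_mul]
    _ ≤ (K * |a - a'|) * 1 + 1 * (K * |b - b'|) := by
        apply add_le_add
        · exact mul_le_mul (hLip a a') (habs b) (abs_nonneg _)
            (le_trans (abs_nonneg _) (hLip a a'))
        · exact mul_le_mul (habs a') (hLip b b') (abs_nonneg _) zero_le_one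
    _ = K * |a - a'| + K * |b - b'| := by ring

lemma sup_ge {t : ℝ} {F : ℝ → ℝ} (hF : ContinuousOn F (Set.Icc 0 t))
    {s : ℝ} (hs : s ∈ Set.Icc (0:ℝ) t) :
    F s ≤ ⨆ u : Set.Icc (0:ℝ) t, F u.1 := by
  have hbdd : BddAbove (Set.range fun u : Set.Icc (0:ℝ) t => F u.1) := by
    have hr : (Set.range fun u : Set.Icc (0:ℝ) t => F u.1) = F '' Set.Icc 0 t := by
      ext y; simp [Set.mem_image]
    rw [hr]
    exact (isCompact_Icc.image_of_continuousOn hF).bddAbove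
  exact le_ciSup hbdd ⟨s, hs⟩

section WA

variable {d N : ℕ} {α R M L0 : ℝ} {f : EuclideanSpace ℝ (Fin d) → ℝ}

lemma sum_exp_pos (hN : 0 < N) (x : Fin N → EuclideanSpace ℝ (Fin d)) :
    0 < ∑ i, Real.exp (-(α * f (x i))) := by
  have : Nonempty (Fin N) := ⟨⟨0, hN⟩⟩
  exact Finset.sum_pos (fun i _ => Real.exp_pos _) Finset.univ_nonempty

lemma weightedAvg_norm_le (hN : 0 < N)
    (x : Fin N → EuclideanSpace ℝ (Fin d)) (hx : ∀ i, ‖x i‖ ≤ R) :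
    ‖weightedAvg α f x‖ ≤ R := by
  have hS := sum_exp_pos (α := α) (f := f) hN x
  rw [weightedAvg, norm_smul, Real.norm_eq_abs, abs_inv, abs_of_pos hS,
    inv_mul_le_iff₀ hS]
  calc ‖∑ i, Real.exp (-(α * f (x i))) • x i‖
      ≤ ∑ i, ‖Real.exp (-(α * f (x i))) • x i‖ := norm_sum_le _ _
    _ ≤ ∑ i, Real.exp (-(α * f (x i))) * R := by
        apply Finset.sum_le_sum; intro i _
        rw [norm_smul, Real.norm_eq_abs, abs_of_pos (Real.exp_pos _)]
        exact mul_le_mul_of_nonneg_left (hx i) (Real.exp_pos _).le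
    _ = (∑ i, Real.exp (-(α * f (x i)))) * R := by rw [← Finset.sum_mul]

lemma weightedAvg_lip (hN : 0 < N) (hα : 0 < α) (hL0 : 0 ≤ L0)
    (hfpos : ∀ z, 0 ≤ f z) (hM : ∀ z : EuclideanSpace ℝ (Fin d), ‖z‖ ≤ R → f z ≤ M)
    (hLip : ∀ z w : EuclideanSpace ℝ (Fin d), ‖z‖ ≤ R → ‖w‖ ≤ R →
      |f z - f w| ≤ L0 * ‖z - w‖)
    (x y : Fin N → EuclideanSpace ℝ (Fin d)) (hx : ∀ i, ‖x i‖ ≤ R) (hy : ∀ i, ‖y i‖ ≤ R)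
    {D : ℝ} (hD : 0 ≤ D) (hxy : ∀ i, ‖x i - y i‖ ≤ D) :
    ‖weightedAvg α f x - weightedAvg α f y‖ ≤
      (Real.exp (α * M) * (1 + α * L0 * R) + α * L0 * R * Real.exp (2 * α * M)) * D := by
  have hR : 0 ≤ R := le_trans (norm_nonneg _) (hx ⟨0, hN⟩)
  set wx : Fin N → ℝ := fun i => Real.exp (-(α * f (x i))) with hwx
  set wy : Fin N → ℝ := fun i => Real.exp (-(α * f (y i))) with hwy
  have hw1 : ∀ i, wx i ≤ 1 := fun i => Real.exp_le_one_iff.mpr (by nlinarith [hfpos (x i)])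
  have hw1' : ∀ i, wy i ≤ 1 := fun i => Real.exp_le_one_iff.mpr (by nlinarith [hfpos (y i)])
  have hwlb : ∀ i, (Real.exp (α * M))⁻¹ ≤ wx i := fun i => by
    rw [← Real.exp_neg]
    exact Real.exp_le_exp.2 (by nlinarith [hM (x i) (hx i)])
  have hwlb' : ∀ i, (Real.exp (α * M))⁻¹ ≤ wy i := fun i => by
    rw [← Real.exp_neg]
    exact Real.exp_le_exp.2 (by nlinarith [hM (y i) (hy i)])
  have hwdiff : ∀ i, |wx i - wy i| ≤ α * L0 * D := fun i => by
    calc |wx i - wy i| ≤ |(-(α * f (x i))) - (-(α * f (y i)))| :=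
          exp_lip (by nlinarith [hfpos (x i)]) (by nlinarith [hfpos (y i)])
      _ = α * |f (x i) - f (y i)| := by
          rw [show (-(α * f (x i))) - (-(α * f (y i))) = α * (f (y i) - f (x i)) by ring,
            abs_mul, abs_of_pos hα, abs_sub_comm]
      _ ≤ α * (L0 * ‖x i - y i‖) := by
          exact mul_le_mul_of_nonneg_left (hLip _ _ (hx i) (hy i)) hα.le
      _ ≤ α * (L0 * D) := by
          apply mul_le_mul_of_nonneg_left (mul_le_mul_of_nonneg_left (hxy i) hL0) hα.le
      _ = α * L0 * D := by ring
  set s : ℝ := N * (Real.exp (α * M))⁻¹ with hsdef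
  have hs : 0 < s := by positivity
  have hSx : s ≤ ∑ i, wx i := by
    calc s = ∑ _i : Fin N, (Real.exp (α * M))⁻¹ := by
          rw [Finset.sum_const, Finset.card_univ, Fintype.card_fin, nsmul_eq_mul]
      _ ≤ ∑ i, wx i := Finset.sum_le_sum fun i _ => hwlb i
  have hSy : s ≤ ∑ i, wy i := by
    calc s = ∑ _i : Fin N, (Real.exp (α * M))⁻¹ := by
          rw [Finset.sum_const, Finset.card_univ, Fintype.card_fin, nsmul_eq_mul]
      _ ≤ ∑ i, wy i := Finset.sum_le_sum fun i _ => hwlb' i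
  have hTy : ‖∑ i, wy i • y i‖ ≤ N * R := by
    calc ‖∑ i, wy i • y i‖ ≤ ∑ i, ‖wy i • y i‖ := norm_sum_le _ _
      _ ≤ ∑ _i : Fin N, R := by
          apply Finset.sum_le_sum; intro i _
          rw [norm_smul, Real.norm_eq_abs, abs_of_pos (Real.exp_pos _)]
          calc wy i * ‖y i‖ ≤ 1 * R :=
                mul_le_mul (hw1' i) (hy i) (norm_nonneg _) zero_le_one
            _ = R := one_mul R
      _ = N * R := by rw [Finset.sum_const, Finset.card_univ, Fintype.card_fin, nsmul_eq_mul]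
  have hTdiff : ‖(∑ i, wx i • x i) - ∑ i, wy i • y i‖ ≤ N * ((1 + α * L0 * R) * D) := by
    rw [← Finset.sum_sub_distrib]
    calc ‖∑ i, (wx i • x i - wy i • y i)‖ ≤ ∑ i, ‖wx i • x i - wy i • y i‖ := norm_sum_le _ _
      _ ≤ ∑ _i : Fin N, (1 + α * L0 * R) * D := by
          apply Finset.sum_le_sum; intro i _
          have hdec : wx i • x i - wy i • y i = wx i • (x i - y i) + (wx i - wy i) • y i := by
            rw [smul_sub, sub_smul]; abel
          calc ‖wx i • x i - wy i • y i‖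
              ≤ ‖wx i • (x i - y i)‖ + ‖(wx i - wy i) • y i‖ := by
                rw [hdec]; exact norm_add_le _ _
            _ = wx i * ‖x i - y i‖ + |wx i - wy i| * ‖y i‖ := by
                rw [norm_smul, norm_smul, Real.norm_eq_abs, Real.norm_eq_abs,
                  abs_of_pos (Real.exp_pos _)]
            _ ≤ 1 * D + (α * L0 * D) * R := by
                apply add_le_add
                · exact mul_le_mul (hw1 i) (hxy i) (norm_nonneg _) zero_le_one
                · exact mul_le_mul (hwdiff i) (hy i) (norm_nonneg _) (by positivity)
            _ = (1 + α * L0 * R) * D := by ring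
      _ = N * ((1 + α * L0 * R) * D) := by
          rw [Finset.sum_const, Finset.card_univ, Fintype.card_fin, nsmul_eq_mul]
  have hSdiff : |(∑ i, wx i) - ∑ i, wy i| ≤ N * (α * L0 * D) := by
    rw [← Finset.sum_sub_distrib]
    calc |∑ i, (wx i - wy i)| ≤ ∑ i, |wx i - wy i| := Finset.abs_sum_le_sum_abs _ _
      _ ≤ ∑ _i : Fin N, α * L0 * D := Finset.sum_le_sum fun i _ => hwdiff i
      _ = N * (α * L0 * D) := by
          rw [Finset.sum_const, Finset.card_univ, Fintype.card_fin, nsmul_eq_mul]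
  have key := quot_lip hs hSx hSy hTy hTdiff hSdiff
  rw [weightedAvg, weightedAvg]
  refine le_trans key (le_of_eq ?_)
  have hN0 : (N : ℝ) ≠ 0 := Nat.cast_ne_zero.2 hN.ne'
  have he : Real.exp (α * M) ≠ 0 := Real.exp_ne_zero _
  have h2e : Real.exp (2 * α * M) = Real.exp (α * M) * Real.exp (α * M) := by
    rw [← Real.exp_add]; ring_nf
  rw [hsdef, h2e]
  field_simp

end WA

section PB

variable {d : ℕ} {β R M L0 : ℝ} {f : EuclideanSpace ℝ (Fin d) → ℝ}

lemma personalBest_norm_le (hβ : 0 < β) (hf : Continuous f) {t : ℝ} (ht : 0 ≤ t)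
    (g : ℝ → EuclideanSpace ℝ (Fin d)) (hg : ContinuousOn g (Set.Icc 0 t))
    (hgR : ∀ s ∈ Set.Icc (0:ℝ) t, ‖g s‖ ≤ R) :
    ‖personalBest β f g t‖ ≤ R := by
  rcases eq_or_lt_of_le ht with h0 | h0
  · rw [personalBest, if_pos h0.symm]
    exact hgR 0 ⟨le_refl 0, ht⟩
  set w : ℝ → ℝ := fun s => Real.exp (-(β * f (g s))) with hwdef
  have hfg : ContinuousOn (fun s => f (g s)) (Set.Icc 0 t) := hf.comp_continuousOn hg
  have hcw : ContinuousOn w (Set.Icc 0 t) :=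
    Real.continuous_exp.comp_continuousOn ((continuousOn_const.mul hfg).neg)
  have hcw' : ContinuousOn w (Set.uIcc 0 t) := by rwa [Set.uIcc_of_le ht]
  have hiw : IntervalIntegrable w MeasureTheory.volume 0 t := hcw'.intervalIntegrable
  have hcwg : ContinuousOn (fun s => w s • g s) (Set.uIcc 0 t) := by
    rw [Set.uIcc_of_le ht]; exact hcw.smul hg
  have hiwg : IntervalIntegrable (fun s => w s • g s) MeasureTheory.volume 0 t :=
    hcwg.intervalIntegrable
  have hDpos : 0 < ∫ s in (0:ℝ)..t, w s :=
    intervalIntegral.intervalIntegral_pos_of_pos_on hiw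
      (fun s _ => Real.exp_pos _) h0
  rw [personalBest, if_neg h0.ne', norm_smul, Real.norm_eq_abs, abs_inv, abs_of_pos hDpos]
  have hkey : ‖∫ s in (0:ℝ)..t, w s • g s‖ ≤ (∫ s in (0:ℝ)..t, w s) * R := by
    calc ‖∫ s in (0:ℝ)..t, w s • g s‖ ≤ ∫ s in (0:ℝ)..t, ‖w s • g s‖ :=
          intervalIntegral.norm_integral_le_integral_norm ht
      _ ≤ ∫ s in (0:ℝ)..t, w s * R := by
          apply intervalIntegral.integral_mono_on ht hiwg.norm (hiw.mul_const R)
          intro s hs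
          rw [norm_smul, Real.norm_eq_abs, abs_of_pos (Real.exp_pos _)]
          exact mul_le_mul_of_nonneg_left (hgR s hs) (Real.exp_pos _).le
      _ = (∫ s in (0:ℝ)..t, w s) * R := intervalIntegral.integral_mul_const _ _
  calc (∫ s in (0:ℝ)..t, w s)⁻¹ * ‖∫ s in (0:ℝ)..t, w s • g s‖
      ≤ (∫ s in (0:ℝ)..t, w s)⁻¹ * ((∫ s in (0:ℝ)..t, w s) * R) :=
        mul_le_mul_of_nonneg_left hkey (by positivity)
    _ = R := by field_simp

lemma personalBest_lip (hβ : 0 < β) (hL0 : 0 ≤ L0) (hM0 : 0 ≤ M) (hR : 0 ≤ R)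
    (hf : Continuous f) (hfpos : ∀ z, 0 ≤ f z)
    (hM : ∀ z : EuclideanSpace ℝ (Fin d), ‖z‖ ≤ R → f z ≤ M)
    (hLip : ∀ z w : EuclideanSpace ℝ (Fin d), ‖z‖ ≤ R → ‖w‖ ≤ R →
      |f z - f w| ≤ L0 * ‖z - w‖)
    {t : ℝ} (ht : 0 ≤ t) (g h : ℝ → EuclideanSpace ℝ (Fin d))
    (hg : ContinuousOn g (Set.Icc 0 t)) (hh : ContinuousOn h (Set.Icc 0 t))
    (hgR : ∀ s ∈ Set.Icc (0:ℝ) t, ‖g s‖ ≤ R) (hhR : ∀ s ∈ Set.Icc (0:ℝ) t, ‖h s‖ ≤ R)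
    {D : ℝ} (hD : 0 ≤ D) (hgh : ∀ s ∈ Set.Icc (0:ℝ) t, ‖g s - h s‖ ≤ D) :
    ‖personalBest β f g t - personalBest β f h t‖ ≤
      (Real.exp (β * M) * (1 + β * L0 * R) + β * L0 * R * Real.exp (2 * β * M)) * D := by
  have hK1 : (1:ℝ) ≤ Real.exp (β * M) * (1 + β * L0 * R) + β * L0 * R * Real.exp (2 * β * M) := by
    have h1 : (1:ℝ) ≤ Real.exp (β * M) := Real.one_le_exp (by positivity)
    have h2 : 0 ≤ β * L0 * R := by positivity
    nlinarith [Real.exp_pos (2 * β * M), mul_nonneg (sub_nonneg.2 h1) h2,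
      mul_nonneg h2 (Real.exp_pos (2 * β * M)).le]
  rcases eq_or_lt_of_le ht with h0 | h0
  · rw [personalBest, personalBest, if_pos h0.symm, if_pos h0.symm]
    calc ‖g 0 - h 0‖ ≤ D := hgh 0 ⟨le_refl 0, ht⟩
      _ = 1 * D := (one_mul D).symm
      _ ≤ _ := mul_le_mul_of_nonneg_right hK1 hD
  set wg : ℝ → ℝ := fun s => Real.exp (-(β * f (g s))) with hwgdef
  set wh : ℝ → ℝ := fun s => Real.exp (-(β * f (h s))) with hwhdef
  have hcwg : ContinuousOn wg (Set.Icc 0 t) :=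
    Real.continuous_exp.comp_continuousOn
      ((continuousOn_const.mul (hf.comp_continuousOn hg)).neg)
  have hcwh : ContinuousOn wh (Set.Icc 0 t) :=
    Real.continuous_exp.comp_continuousOn
      ((continuousOn_const.mul (hf.comp_continuousOn hh)).neg)
  have hiwg : IntervalIntegrable wg MeasureTheory.volume 0 t := by
    apply ContinuousOn.intervalIntegrable; rwa [Set.uIcc_of_le ht]
  have hiwh : IntervalIntegrable wh MeasureTheory.volume 0 t := by
    apply ContinuousOn.intervalIntegrable; rwa [Set.uIcc_of_le ht]
  have hiwgg : IntervalIntegrable (fun s => wg s • g s) MeasureTheory.volume 0 t := by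
    apply ContinuousOn.intervalIntegrable; rw [Set.uIcc_of_le ht]; exact hcwg.smul hg
  have hiwhh : IntervalIntegrable (fun s => wh s • h s) MeasureTheory.volume 0 t := by
    apply ContinuousOn.intervalIntegrable; rw [Set.uIcc_of_le ht]; exact hcwh.smul hh
  have hIoc : Set.uIoc (0:ℝ) t ⊆ Set.Icc 0 t := by
    rw [Set.uIoc_of_le ht]; exact Set.Ioc_subset_Icc_self
  -- pointwise weight bounds
  have hwg1 : ∀ s, wg s ≤ 1 := fun s => Real.exp_le_one_iff.mpr (by nlinarith [hfpos (g s)])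
  have hwh1 : ∀ s, wh s ≤ 1 := fun s => Real.exp_le_one_iff.mpr (by nlinarith [hfpos (h s)])
  have hwglb : ∀ s ∈ Set.Icc (0:ℝ) t, (Real.exp (β * M))⁻¹ ≤ wg s := fun s hs => by
    rw [← Real.exp_neg]
    exact Real.exp_le_exp.2 (by nlinarith [hM (g s) (hgR s hs)])
  have hwhlb : ∀ s ∈ Set.Icc (0:ℝ) t, (Real.exp (β * M))⁻¹ ≤ wh s := fun s hs => by
    rw [← Real.exp_neg]
    exact Real.exp_le_exp.2 (by nlinarith [hM (h s) (hhR s hs)])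
  have hwdiff : ∀ s ∈ Set.Icc (0:ℝ) t, |wg s - wh s| ≤ β * L0 * D := fun s hs => by
    calc |wg s - wh s| ≤ |(-(β * f (g s))) - (-(β * f (h s)))| :=
          exp_lip (by nlinarith [hfpos (g s)]) (by nlinarith [hfpos (h s)])
      _ = β * |f (g s) - f (h s)| := by
          rw [show (-(β * f (g s))) - (-(β * f (h s))) = β * (f (h s) - f (g s)) by ring,
            abs_mul, abs_of_pos hβ, abs_sub_comm]
      _ ≤ β * (L0 * ‖g s - h s‖) :=
          mul_le_mul_of_nonneg_left (hLip _ _ (hgR s hs) (hhR s hs)) hβ.le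
      _ ≤ β * (L0 * D) :=
          mul_le_mul_of_nonneg_left (mul_le_mul_of_nonneg_left (hgh s hs) hL0) hβ.le
      _ = β * L0 * D := by ring
  set s0 : ℝ := t * (Real.exp (β * M))⁻¹ with hs0def
  have hs0 : 0 < s0 := by positivity
  -- lower bounds on denominators
  have hSg : s0 ≤ ∫ s in (0:ℝ)..t, wg s := by
    have := intervalIntegral.integral_mono_on ht
      (intervalIntegrable_const (c := (Real.exp (β * M))⁻¹)) hiwg hwglb
    rwa [intervalIntegral.integral_const, sub_zero, smul_eq_mul] at this
  have hSh : s0 ≤ ∫ s in (0:ℝ)..t, wh s := by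
    have := intervalIntegral.integral_mono_on ht
      (intervalIntegrable_const (c := (Real.exp (β * M))⁻¹)) hiwh hwhlb
    rwa [intervalIntegral.integral_const, sub_zero, smul_eq_mul] at this
  -- numerator bounds
  have hTy : ‖∫ s in (0:ℝ)..t, wh s • h s‖ ≤ t * R := by
    have := intervalIntegral.norm_integral_le_of_norm_le_const
      (C := R) (f := fun s => wh s • h s) (a := 0) (b := t) ?_
    · rwa [sub_zero, abs_of_nonneg ht, mul_comm] at this
    · intro s hs
      rw [norm_smul, Real.norm_eq_abs, abs_of_pos (Real.exp_pos _)]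
      calc wh s * ‖h s‖ ≤ 1 * R :=
            mul_le_mul (hwh1 s) (hhR s (hIoc hs)) (norm_nonneg _) zero_le_one
        _ = R := one_mul R
  have hTdiff : ‖(∫ s in (0:ℝ)..t, wg s • g s) - ∫ s in (0:ℝ)..t, wh s • h s‖
      ≤ t * ((1 + β * L0 * R) * D) := by
    rw [← intervalIntegral.integral_sub hiwgg hiwhh]
    have := intervalIntegral.norm_integral_le_of_norm_le_const
      (C := (1 + β * L0 * R) * D) (f := fun s => wg s • g s - wh s • h s) (a := 0) (b := t) ?_
    · rwa [sub_zero, abs_of_nonneg ht, mul_comm] at this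
    · intro s hs
      have hs' := hIoc hs
      have hdec : wg s • g s - wh s • h s = wg s • (g s - h s) + (wg s - wh s) • h s := by
        rw [smul_sub, sub_smul]; abel
      calc ‖wg s • g s - wh s • h s‖
          ≤ ‖wg s • (g s - h s)‖ + ‖(wg s - wh s) • h s‖ := by
            rw [hdec]; exact norm_add_le _ _
        _ = wg s * ‖g s - h s‖ + |wg s - wh s| * ‖h s‖ := by
            rw [norm_smul, norm_smul, Real.norm_eq_abs, Real.norm_eq_abs,
              abs_of_pos (Real.exp_pos _)]
        _ ≤ 1 * D + (β * L0 * D) * R := by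
            apply add_le_add
            · exact mul_le_mul (hwg1 s) (hgh s hs') (norm_nonneg _) zero_le_one
            · exact mul_le_mul (hwdiff s hs') (hhR s hs') (norm_nonneg _) (by positivity)
        _ = (1 + β * L0 * R) * D := by ring
  have hSdiff : |(∫ s in (0:ℝ)..t, wg s) - ∫ s in (0:ℝ)..t, wh s| ≤ t * (β * L0 * D) := by
    rw [← intervalIntegral.integral_sub hiwg hiwh]
    have := intervalIntegral.norm_integral_le_of_norm_le_const
      (C := β * L0 * D) (f := fun s => wg s - wh s) (a := 0) (b := t) ?_
    · rwa [sub_zero, abs_of_nonneg ht, mul_comm, Real.norm_eq_abs] at this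
    · intro s hs
      rw [Real.norm_eq_abs]
      exact hwdiff s (hIoc hs)
  rw [personalBest, personalBest, if_neg h0.ne', if_neg h0.ne']
  have key := quot_lip hs0 hSg hSh hTy hTdiff hSdiff
  refine le_trans key (le_of_eq ?_)
  have ht0 : t ≠ 0 := h0.ne'
  have he : Real.exp (β * M) ≠ 0 := Real.exp_ne_zero _
  have h2e : Real.exp (2 * β * M) = Real.exp (β * M) * Real.exp (β * M) := by
    rw [← Real.exp_add]; ring_nf
  rw [hs0def, h2e]
  field_simp

end PB

lemma He_prod_le_one {He : ℝ → ℝ} (h01 : ∀ x, 0 ≤ He x ∧ He x ≤ 1) (a b : ℝ) :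
    |He a * He b| ≤ 1 := by
  rw [abs_mul]
  have h1 : |He a| ≤ 1 := abs_le.2 ⟨by linarith [(h01 a).1], (h01 a).2⟩
  have h2 : |He b| ≤ 1 := abs_le.2 ⟨by linarith [(h01 b).1], (h01 b).2⟩
  nlinarith [abs_nonneg (He a), abs_nonneg (He b)]

lemma abs_sub_sub {a b a' b' x y : ℝ} (h1 : |a - a'| ≤ x) (h2 : |b - b'| ≤ y) :
    |(a - b) - (a' - b')| ≤ x + y := by
  have heq : (a - b) - (a' - b') = (a - a') + -(b - b') := by ring
  rw [heq]
  exact (abs_add_le _ _).trans (by rw [abs_neg]; exact add_le_add h1 h2)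

lemma smul_split {E : Type*} [AddCommGroup E] [Module ℝ E] (a a' : ℝ) (X X' : E) :
    a • X - a' • X' = (a - a') • X + a' • (X - X') := by module

lemma drift_split {E : Type*} [AddCommGroup E] [Module ℝ E] (a b a' b' : ℝ) (X Y X' Y' : E) :
    (-a • X - b • Y) - (-a' • X' - b' • Y') = -((a • X - a' • X') + (b • Y - b' • Y')) := by
  module

set_option maxHeartbeats 2000000 in
theorem stmt_9 (d N : ℕ) (hd : 1 ≤ d) (hN : 1 ≤ N)
    (α β ε C : ℝ) (hα : 0 < α) (hβ : 0 < β) (hε : 0 < ε) (hC : 0 < C)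
    (f : EuclideanSpace ℝ (Fin d) → ℝ) (hf : Continuous f) (hfpos : ∀ x, 0 ≤ f x)
    (Lf : ℝ → ℝ)
    (hfLip : ∀ n : ℝ, 0 < n → ∀ x y : EuclideanSpace ℝ (Fin d), ‖x‖ ≤ n → ‖y‖ ≤ n →
      |f x - f y| ≤ Lf n * ‖x - y‖)
    (He : ℝ → ℝ) (hHe01 : ∀ x, 0 ≤ He x ∧ He x ≤ 1)
    (hHeLip : ∀ x y : ℝ, |He x - He y| ≤ (C / ε) * |x - y|) :
    ∀ R : ℝ, 0 < R → ∃ L > 0, ∀ t : ℝ, 0 ≤ t →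
      ∀ (φ ψ : ℝ → Fin N → EuclideanSpace ℝ (Fin d)),
      ContinuousOn φ (Set.Ici 0) → ContinuousOn ψ (Set.Ici 0) →
      (⨆ s : Set.Icc (0:ℝ) t, Real.sqrt (∑ i, ‖φ s.1 i‖ ^ 2)) ≤ R →
      (⨆ s : Set.Icc (0:ℝ) t, Real.sqrt (∑ i, ‖ψ s.1 i‖ ^ 2)) ≤ R →
      Real.sqrt (∑ i, ‖driftB α β f He i t φ - driftB α β f He i t ψ‖ ^ 2) ≤
        L * ⨆ s : Set.Icc (0:ℝ) t, Real.sqrt (∑ i, ‖φ s.1 i - ψ s.1 i‖ ^ 2) := by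
  intro R hR
  have hN0 : 0 < N := hN
  -- max of f on the ball of radius R
  obtain ⟨z, hz, hmax⟩ := (isCompact_closedBall (0 : EuclideanSpace ℝ (Fin d)) R).exists_isMaxOn
    ⟨0, Metric.mem_closedBall_self hR.le⟩ hf.continuousOn
  set M := f z with hMdef
  have hM : ∀ x : EuclideanSpace ℝ (Fin d), ‖x‖ ≤ R → f x ≤ M := fun x hx =>
    hmax (by rwa [Metric.mem_closedBall, dist_zero_right])
  have hM0 : 0 ≤ M := hfpos z
  set L0 := max (Lf R) 0 with hL0def
  have hL0 : 0 ≤ L0 := le_max_right _ _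
  have hLip : ∀ x y : EuclideanSpace ℝ (Fin d), ‖x‖ ≤ R → ‖y‖ ≤ R →
      |f x - f y| ≤ L0 * ‖x - y‖ := fun x y hx hy =>
    le_trans (hfLip R hR x y hx hy)
      (mul_le_mul_of_nonneg_right (le_max_left _ _) (norm_nonneg _))
  set Kv := Real.exp (α * M) * (1 + α * L0 * R) + α * L0 * R * Real.exp (2 * α * M) with hKvdef
  set Kp := Real.exp (β * M) * (1 + β * L0 * R) + β * L0 * R * Real.exp (2 * β * M) with hKpdef
  have hαL0R : 0 ≤ α * L0 * R := mul_nonneg (mul_nonneg hα.le hL0) hR.le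
  have hβL0R : 0 ≤ β * L0 * R := mul_nonneg (mul_nonneg hβ.le hL0) hR.le
  have hKv0 : 0 ≤ Kv := by
    rw [hKvdef]
    nlinarith [Real.exp_pos (α * M), Real.exp_pos (2 * α * M),
      mul_nonneg hαL0R (Real.exp_pos (2 * α * M)).le]
  have hKp0 : 0 ≤ Kp := by
    rw [hKpdef]
    nlinarith [Real.exp_pos (β * M), Real.exp_pos (2 * β * M),
      mul_nonneg hβL0R (Real.exp_pos (2 * β * M)).le]
  set CE := C / ε with hCEdef
  have hCE0 : 0 ≤ CE := by rw [hCEdef]; positivity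
  set Kl := CE * (L0 + L0 * Kv) + CE * (L0 * Kp + L0 * Kv) with hKldef
  set Km := CE * (L0 + L0 * Kp) + CE * (L0 * Kv + L0 * Kp) with hKmdef
  have hKl0 : 0 ≤ Kl := by
    rw [hKldef]
    exact add_nonneg
      (mul_nonneg hCE0 (by nlinarith [mul_nonneg hL0 hKv0]))
      (mul_nonneg hCE0 (by nlinarith [mul_nonneg hL0 hKv0, mul_nonneg hL0 hKp0]))
  have hKm0 : 0 ≤ Km := by
    rw [hKmdef]
    exact add_nonneg
      (mul_nonneg hCE0 (by nlinarith [mul_nonneg hL0 hKp0]))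
      (mul_nonneg hCE0 (by nlinarith [mul_nonneg hL0 hKv0, mul_nonneg hL0 hKp0]))
  set Kb := Kl * (2 * R) + (1 + Kv) + (Km * (2 * R) + (1 + Kp)) with hKbdef
  have h2R : (0:ℝ) ≤ 2 * R := by linarith
  have hKb0 : 0 < Kb := by
    rw [hKbdef]
    nlinarith [mul_nonneg hKl0 h2R, mul_nonneg hKm0 h2R]
  have hsqrtN : 0 < Real.sqrt N := Real.sqrt_pos.2 (by exact_mod_cast hN0)
  refine ⟨Real.sqrt N * Kb, mul_pos hsqrtN hKb0, ?_⟩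
  intro t ht φ ψ hφc hψc hφR hψR
  set δ := ⨆ s : Set.Icc (0:ℝ) t, Real.sqrt (∑ i, ‖φ s.1 i - ψ s.1 i‖ ^ 2) with hδdef
  -- coordinate continuity
  have hcφ : ∀ i : Fin N, ContinuousOn (fun s => φ s i) (Set.Icc 0 t) := fun i =>
    (continuous_apply i).comp_continuousOn (hφc.mono Set.Icc_subset_Ici_self)
  have hcψ : ∀ i : Fin N, ContinuousOn (fun s => ψ s i) (Set.Icc 0 t) := fun i =>
    (continuous_apply i).comp_continuousOn (hψc.mono Set.Icc_subset_Ici_self)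
  have hFφ : ContinuousOn (fun s => Real.sqrt (∑ i, ‖φ s i‖ ^ 2)) (Set.Icc 0 t) :=
    Real.continuous_sqrt.comp_continuousOn
      (continuousOn_finset_sum Finset.univ (fun i _ => (hcφ i).norm.pow 2))
  have hFψ : ContinuousOn (fun s => Real.sqrt (∑ i, ‖ψ s i‖ ^ 2)) (Set.Icc 0 t) :=
    Real.continuous_sqrt.comp_continuousOn
      (continuousOn_finset_sum Finset.univ (fun i _ => (hcψ i).norm.pow 2))
  have hFd : ContinuousOn (fun s => Real.sqrt (∑ i, ‖φ s i - ψ s i‖ ^ 2)) (Set.Icc 0 t) :=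
    Real.continuous_sqrt.comp_continuousOn
      (continuousOn_finset_sum Finset.univ (fun i _ => ((hcφ i).sub (hcψ i)).norm.pow 2))
  have hti : t ∈ Set.Icc (0:ℝ) t := ⟨ht, le_refl t⟩
  -- pointwise bounds from the sup bounds
  have hbRφ : ∀ s ∈ Set.Icc (0:ℝ) t, ∀ i, ‖φ s i‖ ≤ R := fun s hs i =>
    (norm_le_sqrt_sum (φ s) i).trans ((sup_ge hFφ hs).trans hφR)
  have hbRψ : ∀ s ∈ Set.Icc (0:ℝ) t, ∀ i, ‖ψ s i‖ ≤ R := fun s hs i =>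
    (norm_le_sqrt_sum (ψ s) i).trans ((sup_ge hFψ hs).trans hψR)
  have hδdiff : ∀ s ∈ Set.Icc (0:ℝ) t, ∀ i, ‖φ s i - ψ s i‖ ≤ δ := fun s hs i =>
    (norm_le_sqrt_sum (fun j => φ s j - ψ s j) i).trans (sup_ge hFd hs)
  have hδ0 : 0 ≤ δ := le_trans (Real.sqrt_nonneg _) (sup_ge hFd ⟨le_refl 0, ht⟩)
  -- per-block bound
  have hblock : ∀ i : Fin N,
      ‖driftB α β f He i t φ - driftB α β f He i t ψ‖ ≤ Kb * δ := by
    intro i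
    have hvφR : ‖weightedAvg α f (φ t)‖ ≤ R :=
      weightedAvg_norm_le hN0 (φ t) (hbRφ t hti)
    have hvψR : ‖weightedAvg α f (ψ t)‖ ≤ R :=
      weightedAvg_norm_le hN0 (ψ t) (hbRψ t hti)
    have hpφR : ‖personalBest β f (fun s => φ s i) t‖ ≤ R :=
      personalBest_norm_le hβ hf ht _ (hcφ i) (fun s hs => hbRφ s hs i)
    have hpψR : ‖personalBest β f (fun s => ψ s i) t‖ ≤ R :=
      personalBest_norm_le hβ hf ht _ (hcψ i) (fun s hs => hbRψ s hs i)
    have hv : ‖weightedAvg α f (φ t) - weightedAvg α f (ψ t)‖ ≤ Kv * δ :=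
      weightedAvg_lip hN0 hα hL0 hfpos hM hLip (φ t) (ψ t)
        (hbRφ t hti) (hbRψ t hti) hδ0 (hδdiff t hti)
    have hp : ‖personalBest β f (fun s => φ s i) t - personalBest β f (fun s => ψ s i) t‖
        ≤ Kp * δ :=
      personalBest_lip hβ hL0 hM0 hR.le hf hfpos hM hLip ht _ _ (hcφ i) (hcψ i)
        (fun s hs => hbRφ s hs i) (fun s hs => hbRψ s hs i) hδ0
        (fun s hs => hδdiff s hs i)
    -- f-value differences
    have hfφ : |f (φ t i) - f (ψ t i)| ≤ L0 * δ :=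
      le_trans (hLip _ _ (hbRφ t hti i) (hbRψ t hti i))
        (mul_le_mul_of_nonneg_left (hδdiff t hti i) hL0)
    have hfv : |f (weightedAvg α f (φ t)) - f (weightedAvg α f (ψ t))| ≤ L0 * (Kv * δ) :=
      le_trans (hLip _ _ hvφR hvψR) (mul_le_mul_of_nonneg_left hv hL0)
    have hfp : |f (personalBest β f (fun s => φ s i) t)
        - f (personalBest β f (fun s => ψ s i) t)| ≤ L0 * (Kp * δ) :=
      le_trans (hLip _ _ hpφR hpψR) (mul_le_mul_of_nonneg_left hp hL0)
    -- coefficient differences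
    have hlamd : |lamEps α β f He i t φ - lamEps α β f He i t ψ| ≤ Kl * δ := by
      rw [lamEps, lamEps]
      refine le_trans (He_prod hHe01 hHeLip _ _ _ _) ?_
      refine le_trans (add_le_add
        (mul_le_mul_of_nonneg_left (abs_sub_sub hfφ hfv) hCE0)
        (mul_le_mul_of_nonneg_left (abs_sub_sub hfp hfv) hCE0)) (le_of_eq ?_)
      rw [hKldef]; ring
    have hmud : |muEps α β f He i t φ - muEps α β f He i t ψ| ≤ Km * δ := by
      rw [muEps, muEps]
      refine le_trans (He_prod hHe01 hHeLip _ _ _ _) ?_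
      refine le_trans (add_le_add
        (mul_le_mul_of_nonneg_left (abs_sub_sub hfφ hfp) hCE0)
        (mul_le_mul_of_nonneg_left (abs_sub_sub hfv hfp) hCE0)) (le_of_eq ?_)
      rw [hKmdef]; ring
    have hlam1 : |lamEps α β f He i t ψ| ≤ 1 := by rw [lamEps]; exact He_prod_le_one hHe01 _ _
    have hmu1 : |muEps α β f He i t ψ| ≤ 1 := by rw [muEps]; exact He_prod_le_one hHe01 _ _
    -- geometric bounds
    have hXφ : ‖φ t i - weightedAvg α f (φ t)‖ ≤ 2 * R := by
      have := norm_sub_le (φ t i) (weightedAvg α f (φ t))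
      linarith [hbRφ t hti i, hvφR]
    have hYφ : ‖φ t i - personalBest β f (fun s => φ s i) t‖ ≤ 2 * R := by
      have := norm_sub_le (φ t i) (personalBest β f (fun s => φ s i) t)
      linarith [hbRφ t hti i, hpφR]
    have hXd : ‖(φ t i - weightedAvg α f (φ t)) - (ψ t i - weightedAvg α f (ψ t))‖
        ≤ δ + Kv * δ := by
      have heq : (φ t i - weightedAvg α f (φ t)) - (ψ t i - weightedAvg α f (ψ t))
          = (φ t i - ψ t i) - (weightedAvg α f (φ t) - weightedAvg α f (ψ t)) := by abel
      rw [heq]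
      exact (norm_sub_le _ _).trans (add_le_add (hδdiff t hti i) hv)
    have hYd : ‖(φ t i - personalBest β f (fun s => φ s i) t)
        - (ψ t i - personalBest β f (fun s => ψ s i) t)‖ ≤ δ + Kp * δ := by
      have heq : (φ t i - personalBest β f (fun s => φ s i) t)
          - (ψ t i - personalBest β f (fun s => ψ s i) t)
          = (φ t i - ψ t i)
            - (personalBest β f (fun s => φ s i) t - personalBest β f (fun s => ψ s i) t) := by
        abel
      rw [heq]
      exact (norm_sub_le _ _).trans (add_le_add (hδdiff t hti i) hp)
    -- the two parts
    have hpart1 : ‖lamEps α β f He i t φ • (φ t i - weightedAvg α f (φ t))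
        - lamEps α β f He i t ψ • (ψ t i - weightedAvg α f (ψ t))‖
        ≤ (Kl * δ) * (2 * R) + 1 * (δ + Kv * δ) := by
      rw [smul_split]
      refine (norm_add_le _ _).trans ?_
      rw [norm_smul, norm_smul, Real.norm_eq_abs, Real.norm_eq_abs]
      exact add_le_add
        (mul_le_mul hlamd hXφ (norm_nonneg _) (mul_nonneg hKl0 hδ0))
        (mul_le_mul hlam1 hXd (norm_nonneg _) zero_le_one)
    have hpart2 : ‖muEps α β f He i t φ • (φ t i - personalBest β f (fun s => φ s i) t)
        - muEps α β f He i t ψ • (ψ t i - personalBest β f (fun s => ψ s i) t)‖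
        ≤ (Km * δ) * (2 * R) + 1 * (δ + Kp * δ) := by
      rw [smul_split]
      refine (norm_add_le _ _).trans ?_
      rw [norm_smul, norm_smul, Real.norm_eq_abs, Real.norm_eq_abs]
      exact add_le_add
        (mul_le_mul hmud hYφ (norm_nonneg _) (mul_nonneg hKm0 hδ0))
        (mul_le_mul hmu1 hYd (norm_nonneg _) zero_le_one)
    have hsplit : driftB α β f He i t φ - driftB α β f He i t ψ
        = -((lamEps α β f He i t φ • (φ t i - weightedAvg α f (φ t))
              - lamEps α β f He i t ψ • (ψ t i - weightedAvg α f (ψ t)))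
            + (muEps α β f He i t φ • (φ t i - personalBest β f (fun s => φ s i) t)
              - muEps α β f He i t ψ • (ψ t i - personalBest β f (fun s => ψ s i) t))) := by
      rw [driftB, driftB]
      exact drift_split _ _ _ _ _ _ _ _
    rw [hsplit, norm_neg]
    refine (norm_add_le _ _).trans ?_
    refine le_trans (add_le_add hpart1 hpart2) (le_of_eq ?_)
    rw [hKbdef]; ring
  -- assemble
  have hKbD : 0 ≤ Kb * δ := mul_nonneg hKb0.le hδ0
  calc Real.sqrt (∑ i, ‖driftB α β f He i t φ - driftB α β f He i t ψ‖ ^ 2)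
      ≤ Real.sqrt (∑ _i : Fin N, (Kb * δ) ^ 2) :=
        Real.sqrt_le_sqrt (Finset.sum_le_sum fun i _ =>
          pow_le_pow_left₀ (norm_nonneg _) (hblock i) 2)
    _ = Real.sqrt ((N : ℝ) * (Kb * δ) ^ 2) := by
        rw [Finset.sum_const, Finset.card_univ, Fintype.card_fin, nsmul_eq_mul]
    _ = Real.sqrt N * (Kb * δ) := by
        rw [Real.sqrt_mul (Nat.cast_nonneg N), Real.sqrt_sq hKbD]
    _ = Real.sqrt N * Kb * δ := by ring
end

section
/- Let d, N ≥ 1, α > 0, and let f : ℝ^d → ℝ be continuous with f ≥ 0 and Lipschitz continuous on every ball B_n = {x : |x| ≤ n}. Then for every R > 0 there exists a constant ℓ_R > 0 such that for all x, y ∈ (ℝ^d)^N with |x| ≤ R and |y| ≤ R one has (∑_{i=1}^N |(x^i − v_f[x]) − (y^i − v_f[y])|²)^{1/2} ≤ ℓ_R |x − y|, where |x − y|² = ∑_{i=1}^N |x^i − y^i|². -/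
open scoped BigOperators

/-- `exp` is 1-Lipschitz on the nonpositive reals. -/
lemma exp_lip_aux_s11 {s t : ℝ} (hs : s ≤ 0) (ht : t ≤ 0) :
    |Real.exp s - Real.exp t| ≤ |s - t| := by
  wlog h : t ≤ s generalizing s t
  · rw [abs_sub_comm, abs_sub_comm s t]; exact this ht hs (le_of_not_ge h)
  rw [abs_of_nonneg (sub_nonneg.mpr (Real.exp_le_exp.mpr h)),
    abs_of_nonneg (sub_nonneg.mpr h)]
  have h1 := Real.add_one_le_exp (t - s)
  have h2 : Real.exp s ≤ 1 := Real.exp_le_one_iff.mpr hs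
  have h3 : Real.exp s * Real.exp (t - s) = Real.exp t := by
    rw [← Real.exp_add]; ring_nf
  nlinarith [Real.exp_pos s, Real.exp_pos (t - s)]

theorem stmt_11 (d N : ℕ) (hd : 1 ≤ d) (hN : 1 ≤ N) (α : ℝ) (hα : 0 < α)
    (f : EuclideanSpace ℝ (Fin d) → ℝ) (hf : Continuous f) (hfpos : ∀ x, 0 ≤ f x)
    (Lf : ℝ → ℝ)
    (hfLip : ∀ n : ℝ, 0 < n → ∀ x y : EuclideanSpace ℝ (Fin d), ‖x‖ ≤ n → ‖y‖ ≤ n →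
      |f x - f y| ≤ Lf n * ‖x - y‖) :
    ∀ R : ℝ, 0 < R → ∃ ℓ > 0, ∀ x y : Fin N → EuclideanSpace ℝ (Fin d),
      Real.sqrt (∑ i, ‖x i‖ ^ 2) ≤ R → Real.sqrt (∑ i, ‖y i‖ ^ 2) ≤ R →
      Real.sqrt (∑ i, ‖(x i - weightedAvg α f x) - (y i - weightedAvg α f y)‖ ^ 2) ≤
        ℓ * Real.sqrt (∑ i, ‖x i - y i‖ ^ 2) := by
  intro R hR
  set w : (EuclideanSpace ℝ (Fin d)) → ℝ := fun z => Real.exp (-(α * f z)) with hw_def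
  -- bound on f over the closed ball
  obtain ⟨z₀, _, hz₀⟩ := (isCompact_closedBall (0 : (EuclideanSpace ℝ (Fin d))) R).exists_isMaxOn
    ⟨0, Metric.mem_closedBall_self hR.le⟩ hf.continuousOn
  set M := f z₀ with hM_def
  have hM : ∀ z : (EuclideanSpace ℝ (Fin d)), ‖z‖ ≤ R → f z ≤ M := by
    intro z hz
    exact hz₀ (by simpa [Metric.mem_closedBall, dist_zero_right] using hz)
  set c := Real.exp (-(α * M)) with hc_def
  have hc : 0 < c := Real.exp_pos _
  have hw1 : ∀ z : (EuclideanSpace ℝ (Fin d)), w z ≤ 1 := fun z =>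
    Real.exp_le_one_iff.mpr (by nlinarith [hfpos z])
  have hwpos : ∀ z : (EuclideanSpace ℝ (Fin d)), 0 < w z := fun z => Real.exp_pos _
  have hwc : ∀ z : (EuclideanSpace ℝ (Fin d)), ‖z‖ ≤ R → c ≤ w z := fun z hz =>
    Real.exp_le_exp.mpr (by nlinarith [hM z hz])
  clear_value c
  set L := max (Lf R) 0 with hL_def
  have hL0 : 0 ≤ L := le_max_right _ _
  have hLip : ∀ a b : (EuclideanSpace ℝ (Fin d)), ‖a‖ ≤ R → ‖b‖ ≤ R → |f a - f b| ≤ L * ‖a - b‖ := by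
    intro a b ha hb
    calc |f a - f b| ≤ Lf R * ‖a - b‖ := hfLip R hR a b ha hb
      _ ≤ L * ‖a - b‖ := by
          apply mul_le_mul_of_nonneg_right (le_max_left _ _) (norm_nonneg _)
  have hwLip : ∀ a b : (EuclideanSpace ℝ (Fin d)), ‖a‖ ≤ R → ‖b‖ ≤ R → |w a - w b| ≤ α * L * ‖a - b‖ := by
    intro a b ha hb
    have h1 : |w a - w b| ≤ |(-(α * f a)) - (-(α * f b))| :=
      exp_lip_aux_s11 (by nlinarith [hfpos a]) (by nlinarith [hfpos b])
    have h2 : |(-(α * f a)) - (-(α * f b))| = α * |f a - f b| := by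
      have : (-(α * f a)) - (-(α * f b)) = α * (f b - f a) := by ring
      rw [this, abs_mul, abs_of_pos hα, abs_sub_comm]
    calc |w a - w b| ≤ α * |f a - f b| := by rw [← h2]; exact h1
      _ ≤ α * (L * ‖a - b‖) := by
          exact mul_le_mul_of_nonneg_left (hLip a b ha hb) hα.le
      _ = α * L * ‖a - b‖ := by ring
  clear_value L
  have hNpos : (0:ℝ) < N := by exact_mod_cast hN
  have hNc : (0:ℝ) < N * c := by positivity
  set C : ℝ := (N:ℝ) * ((1 + α * L * R) / ((N:ℝ) * c)
      + (N:ℝ) * R * (α * L) / ((N:ℝ) * c) ^ 2) with hC_def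
  have hC0 : 0 ≤ C := by positivity
  refine ⟨1 + Real.sqrt N * C, by positivity, ?_⟩
  intro x y hx hy
  set D := Real.sqrt (∑ i, ‖x i - y i‖ ^ 2) with hD_def
  have hD0 : 0 ≤ D := Real.sqrt_nonneg _
  -- componentwise bounds
  have hcomp : ∀ (u : Fin N → (EuclideanSpace ℝ (Fin d))) (B : ℝ), Real.sqrt (∑ i, ‖u i‖ ^ 2) ≤ B →
      ∀ i, ‖u i‖ ≤ B := by
    intro u B hB i
    have h1 : ‖u i‖ ^ 2 ≤ ∑ j, ‖u j‖ ^ 2 :=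
      Finset.single_le_sum (f := fun j => ‖u j‖ ^ 2) (fun j _ => by positivity)
        (Finset.mem_univ i)
    calc ‖u i‖ = Real.sqrt (‖u i‖ ^ 2) := by
          rw [Real.sqrt_sq (norm_nonneg _)]
      _ ≤ Real.sqrt (∑ j, ‖u j‖ ^ 2) := Real.sqrt_le_sqrt h1
      _ ≤ B := hB
  have hxi := hcomp x R hx
  have hyi := hcomp y R hy
  have hdi : ∀ i, ‖x i - y i‖ ≤ D := hcomp (fun i => x i - y i) D le_rfl
  have hsumD : ∑ i, ‖x i - y i‖ ≤ (N:ℝ) * D := by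
    calc ∑ i, ‖x i - y i‖ ≤ ∑ _i : Fin N, D := Finset.sum_le_sum fun i _ => hdi i
      _ = (N:ℝ) * D := by simp [mul_comm]
  clear_value D
  -- weight sums
  set Wx := ∑ i, w (x i) with hWx_def
  set Wy := ∑ i, w (y i) with hWy_def
  have hWxlb : (N:ℝ) * c ≤ Wx := by
    calc (N:ℝ) * c = ∑ _i : Fin N, c := by simp [mul_comm]
      _ ≤ Wx := Finset.sum_le_sum fun i _ => hwc _ (hxi i)
  have hWylb : (N:ℝ) * c ≤ Wy := by
    calc (N:ℝ) * c = ∑ _i : Fin N, c := by simp [mul_comm]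
      _ ≤ Wy := Finset.sum_le_sum fun i _ => hwc _ (hyi i)
  have hWxpos : 0 < Wx := lt_of_lt_of_le hNc hWxlb
  have hWypos : 0 < Wy := lt_of_lt_of_le hNc hWylb
  set Sx : (EuclideanSpace ℝ (Fin d)) := ∑ i, w (x i) • x i with hSx_def
  set Sy : (EuclideanSpace ℝ (Fin d)) := ∑ i, w (y i) • y i with hSy_def
  have hSdiff : ‖Sx - Sy‖ ≤ (1 + α * L * R) * ((N:ℝ) * D) := by
    have h1 : Sx - Sy = ∑ i, (w (x i) • x i - w (y i) • y i) := by
      rw [hSx_def, hSy_def, Finset.sum_sub_distrib]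
    rw [h1]
    calc ‖∑ i, (w (x i) • x i - w (y i) • y i)‖
        ≤ ∑ i, ‖w (x i) • x i - w (y i) • y i‖ := norm_sum_le _ _
      _ ≤ ∑ _i : Fin N, (1 + α * L * R) * D := by
          apply Finset.sum_le_sum
          intro i _
          have heq : w (x i) • x i - w (y i) • y i
              = w (x i) • (x i - y i) + (w (x i) - w (y i)) • y i := by
            rw [smul_sub, sub_smul]; abel
          rw [heq]
          calc ‖w (x i) • (x i - y i) + (w (x i) - w (y i)) • y i‖
              ≤ ‖w (x i) • (x i - y i)‖ + ‖(w (x i) - w (y i)) • y i‖ :=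
                norm_add_le _ _
            _ = w (x i) * ‖x i - y i‖ + |w (x i) - w (y i)| * ‖y i‖ := by
                rw [norm_smul, norm_smul, Real.norm_eq_abs, Real.norm_eq_abs,
                  abs_of_pos (hwpos _)]
            _ ≤ 1 * D + (α * L * ‖x i - y i‖) * R := by
                apply add_le_add
                · exact mul_le_mul (hw1 _) (hdi i) (norm_nonneg _) zero_le_one
                · exact mul_le_mul (hwLip _ _ (hxi i) (hyi i)) (hyi i)
                    (norm_nonneg _) (by positivity)
            _ ≤ 1 * D + (α * L * D) * R := by
                have : α * L * ‖x i - y i‖ ≤ α * L * D :=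
                  mul_le_mul_of_nonneg_left (hdi i) (by positivity)
                nlinarith
            _ = (1 + α * L * R) * D := by ring
      _ = (N:ℝ) * ((1 + α * L * R) * D) := by simp [mul_comm]
      _ = (1 + α * L * R) * ((N:ℝ) * D) := by ring
  have hWdiff : |Wx - Wy| ≤ α * L * ((N:ℝ) * D) := by
    calc |Wx - Wy| = |∑ i, (w (x i) - w (y i))| := by
          rw [hWx_def, hWy_def, Finset.sum_sub_distrib]
      _ ≤ ∑ i, |w (x i) - w (y i)| := Finset.abs_sum_le_sum_abs _ _
      _ ≤ ∑ i, α * L * ‖x i - y i‖ :=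
          Finset.sum_le_sum fun i _ => hwLip _ _ (hxi i) (hyi i)
      _ = α * L * ∑ i, ‖x i - y i‖ := by rw [Finset.mul_sum]
      _ ≤ α * L * ((N:ℝ) * D) := mul_le_mul_of_nonneg_left hsumD (by positivity)
  have hSynorm : ‖Sy‖ ≤ (N:ℝ) * R := by
    calc ‖Sy‖ ≤ ∑ i, ‖w (y i) • y i‖ := norm_sum_le _ _
      _ ≤ ∑ _i : Fin N, R := by
          apply Finset.sum_le_sum
          intro i _
          rw [norm_smul, Real.norm_eq_abs, abs_of_pos (hwpos _)]
          calc w (y i) * ‖y i‖ ≤ 1 * R :=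
                mul_le_mul (hw1 _) (hyi i) (norm_nonneg _) zero_le_one
            _ = R := one_mul R
      _ = (N:ℝ) * R := by simp [mul_comm]
  -- bound on the difference of weighted averages
  have hvx : weightedAvg α f x = Wx⁻¹ • Sx := rfl
  have hvy : weightedAvg α f y = Wy⁻¹ • Sy := rfl
  clear_value Wx Wy Sx Sy
  have hv : ‖weightedAvg α f x - weightedAvg α f y‖ ≤ C * D := by
    have hsplit : weightedAvg α f x - weightedAvg α f y
        = Wx⁻¹ • (Sx - Sy) + (Wx⁻¹ - Wy⁻¹) • Sy := by
      rw [hvx, hvy, smul_sub, sub_smul]; abel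
    rw [hsplit]
    have hinvx : Wx⁻¹ ≤ ((N:ℝ) * c)⁻¹ := inv_anti₀ hNc hWxlb
    have hinvdiff : |Wx⁻¹ - Wy⁻¹| ≤ α * L * ((N:ℝ) * D) / ((N:ℝ) * c) ^ 2 := by
      have h1 : Wx⁻¹ - Wy⁻¹ = (Wy - Wx) / (Wx * Wy) :=
        inv_sub_inv hWxpos.ne' hWypos.ne'
      rw [h1, abs_div, abs_of_pos (mul_pos hWxpos hWypos), abs_sub_comm]
      have h2 : ((N:ℝ) * c) ^ 2 ≤ Wx * Wy := by
        rw [sq]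
        exact mul_le_mul hWxlb hWylb hNc.le (hNc.le.trans hWxlb)
      exact div_le_div₀ (by positivity) hWdiff (by positivity) h2
    calc ‖Wx⁻¹ • (Sx - Sy) + (Wx⁻¹ - Wy⁻¹) • Sy‖
        ≤ ‖Wx⁻¹ • (Sx - Sy)‖ + ‖(Wx⁻¹ - Wy⁻¹) • Sy‖ := norm_add_le _ _
      _ = Wx⁻¹ * ‖Sx - Sy‖ + |Wx⁻¹ - Wy⁻¹| * ‖Sy‖ := by
          rw [norm_smul, norm_smul, Real.norm_eq_abs, Real.norm_eq_abs,
            abs_of_pos (inv_pos.mpr hWxpos)]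
      _ ≤ ((N:ℝ) * c)⁻¹ * ((1 + α * L * R) * ((N:ℝ) * D))
            + (α * L * ((N:ℝ) * D) / ((N:ℝ) * c) ^ 2) * ((N:ℝ) * R) := by
          apply add_le_add
          · apply mul_le_mul hinvx hSdiff (norm_nonneg _) (by positivity)
          · apply mul_le_mul hinvdiff hSynorm (norm_nonneg _) (by positivity)
      _ = C * D := by
          rw [hC_def]
          field_simp
  -- final assembly via the ℓ² triangle inequality
  set P := PiLp 2 (fun _ : Fin N => (EuclideanSpace ℝ (Fin d))) with hP_def
  set A : P := WithLp.toLp 2 (fun i => x i - y i : Fin N → (EuclideanSpace ℝ (Fin d))) with hA_def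
  set B : P := WithLp.toLp 2 (fun _ => weightedAvg α f x - weightedAvg α f y : Fin N → (EuclideanSpace ℝ (Fin d)))
    with hB_def
  have hAnorm : ‖A‖ = D := by
    rw [hD_def]; exact PiLp.norm_eq_of_L2 A
  have hBnorm : ‖B‖ = Real.sqrt N * ‖weightedAvg α f x - weightedAvg α f y‖ := by
    rw [PiLp.norm_eq_of_L2]
    simp only [hB_def, PiLp.toLp_apply]
    rw [Finset.sum_const, Finset.card_univ, Fintype.card_fin, nsmul_eq_mul,
      Real.sqrt_mul (by positivity), Real.sqrt_sq (norm_nonneg _)]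
  have hABnorm : ‖A - B‖
      = Real.sqrt (∑ i, ‖(x i - weightedAvg α f x) - (y i - weightedAvg α f y)‖ ^ 2) := by
    rw [PiLp.norm_eq_of_L2]
    congr 1
    apply Finset.sum_congr rfl
    intro i _
    congr 2
    show (x i - y i) - (weightedAvg α f x - weightedAvg α f y)
      = (x i - weightedAvg α f x) - (y i - weightedAvg α f y)
    abel
  calc Real.sqrt (∑ i, ‖(x i - weightedAvg α f x) - (y i - weightedAvg α f y)‖ ^ 2)
      = ‖A - B‖ := hABnorm.symm
    _ ≤ ‖A‖ + ‖B‖ := norm_sub_le _ _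
    _ = D + Real.sqrt N * ‖weightedAvg α f x - weightedAvg α f y‖ := by
        rw [hAnorm, hBnorm]
    _ ≤ D + Real.sqrt N * (C * D) := by
        have := mul_le_mul_of_nonneg_left hv (Real.sqrt_nonneg (N:ℝ))
        linarith
    _ = (1 + Real.sqrt N * C) * D := by ring
end

section
/- Let d ≥ 1, β > 0, n > 0, t > 0, and let f : ℝ^d → ℝ be continuous with f ≥ 0 and Lipschitz continuous with constant L_f on B_n = {x : |x| ≤ n}; let f̲ and f̄ denote the infimum and supremum of f on B_n. Then for all continuous paths φ, φ̂ : [0,∞) → ℝ^d with sup_{0≤s≤t}|φ(s)| ≤ n and sup_{0≤s≤t}|φ̂(s)| ≤ n, one has the estimate | ∫_0^t φ̂(s) (exp(−β f(φ(s))) − exp(−β f(φ̂(s)))) ds | / ∫_0^t exp(−β f(φ(s))) ds ≤ β e^{β(f̄ − f̲)} L_f n · sup_{0≤s≤t}|φ(s) − φ̂(s)|. -/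
open scoped BigOperators

lemma exp_diff_le' (a b : ℝ) : |Real.exp a - Real.exp b| ≤ Real.exp (max a b) * |a - b| := by
  wlog h : b ≤ a
  · rw [abs_sub_comm, abs_sub_comm a b, max_comm]; exact this b a (le_of_not_ge h)
  rw [abs_of_nonneg (sub_nonneg.2 (Real.exp_le_exp.2 h)), abs_of_nonneg (sub_nonneg.2 h),
    max_eq_left h]
  have h1 := Real.add_one_le_exp (b - a)
  have h2 : Real.exp (b - a) * Real.exp a = Real.exp b := by
    rw [← Real.exp_add]; ring_nf
  nlinarith [Real.exp_pos a]

theorem stmt_14 (d : ℕ) (hd : 1 ≤ d) (β n Lf t : ℝ)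
    (hβ : 0 < β) (hn : 0 < n) (hLf : 0 ≤ Lf) (ht : 0 < t)
    (f : EuclideanSpace ℝ (Fin d) → ℝ) (hf : Continuous f) (hfpos : ∀ x, 0 ≤ f x)
    (hfLip : ∀ x y : EuclideanSpace ℝ (Fin d), ‖x‖ ≤ n → ‖y‖ ≤ n →
      |f x - f y| ≤ Lf * ‖x - y‖)
    (φ φ' : ℝ → EuclideanSpace ℝ (Fin d))
    (hφ : ContinuousOn φ (Set.Ici 0)) (hφ' : ContinuousOn φ' (Set.Ici 0))
    (hφn : ∀ s ∈ Set.Icc (0:ℝ) t, ‖φ s‖ ≤ n)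
    (hφ'n : ∀ s ∈ Set.Icc (0:ℝ) t, ‖φ' s‖ ≤ n) :
    ‖∫ s in (0:ℝ)..t, (Real.exp (-(β * f (φ s))) - Real.exp (-(β * f (φ' s)))) • φ' s‖
        / (∫ s in (0:ℝ)..t, Real.exp (-(β * f (φ s)))) ≤
      β * Real.exp (β * (sSup (f '' {x | ‖x‖ ≤ n}) - sInf (f '' {x | ‖x‖ ≤ n}))) * Lf * n *
        ⨆ s : Set.Icc (0:ℝ) t, ‖φ s.1 - φ' s.1‖ := by
  set K : Set (EuclideanSpace ℝ (Fin d)) := {x | ‖x‖ ≤ n} with hKdef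
  have hKball : K = Metric.closedBall 0 n := by
    ext x; simp [hKdef, Metric.mem_closedBall, dist_zero_right]
  have hKcomp : IsCompact K := hKball ▸ isCompact_closedBall 0 n
  have hKne : K.Nonempty := ⟨0, by simp [hKdef, hn.le]⟩
  have hScomp : IsCompact (f '' K) := hKcomp.image hf
  set A := sInf (f '' K) with hA
  set B := sSup (f '' K) with hB
  have hmem : ∀ x : EuclideanSpace ℝ (Fin d), ‖x‖ ≤ n → A ≤ f x ∧ f x ≤ B := fun x hx =>
    ⟨csInf_le hScomp.bddBelow (Set.mem_image_of_mem f hx),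
     le_csSup hScomp.bddAbove (Set.mem_image_of_mem f hx)⟩
  set M := ⨆ s : Set.Icc (0:ℝ) t, ‖φ s.1 - φ' s.1‖ with hM
  have hMnn : 0 ≤ M := Real.iSup_nonneg fun s => norm_nonneg _
  have hMbdd : BddAbove (Set.range fun s : Set.Icc (0:ℝ) t => ‖φ s.1 - φ' s.1‖) := by
    refine ⟨2 * n, ?_⟩
    rintro _ ⟨s, rfl⟩
    calc ‖φ s.1 - φ' s.1‖ ≤ ‖φ s.1‖ + ‖φ' s.1‖ := norm_sub_le _ _
      _ ≤ n + n := add_le_add (hφn s.1 s.2) (hφ'n s.1 s.2)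
      _ = 2 * n := by ring
  have hMle : ∀ s ∈ Set.Icc (0:ℝ) t, ‖φ s - φ' s‖ ≤ M := fun s hs =>
    le_ciSup hMbdd (⟨s, hs⟩ : Set.Icc (0:ℝ) t)
  have hsub : Set.Icc (0:ℝ) t ⊆ Set.Ici 0 := fun s hs => hs.1
  -- continuity and integrability of the denominator integrand
  have hc1 : ContinuousOn (fun s => Real.exp (-(β * f (φ s)))) (Set.Icc 0 t) :=
    (Real.continuous_exp.comp (continuous_const.mul hf).neg).comp_continuousOn (hφ.mono hsub)
  have hint1 : IntervalIntegrable (fun s => Real.exp (-(β * f (φ s))))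
      MeasureTheory.volume 0 t := by
    apply ContinuousOn.intervalIntegrable
    rwa [Set.uIcc_of_le ht.le]
  -- denominator lower bound
  have hDlb : t * Real.exp (-(β * B)) ≤ ∫ s in (0:ℝ)..t, Real.exp (-(β * f (φ s))) := by
    have hle : ∀ s ∈ Set.Icc (0:ℝ) t,
        Real.exp (-(β * B)) ≤ Real.exp (-(β * f (φ s))) := by
      intro s hs
      apply Real.exp_le_exp.2
      have := (hmem (φ s) (hφn s hs)).2
      nlinarith
    have := intervalIntegral.integral_mono_on ht.le
      (intervalIntegrable_const (c := Real.exp (-(β * B)))) hint1 hle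
    simpa using this
  have hDpos : 0 < ∫ s in (0:ℝ)..t, Real.exp (-(β * f (φ s))) :=
    lt_of_lt_of_le (by positivity) hDlb
  -- numerator upper bound
  set C := β * Lf * M * n * Real.exp (-(β * A)) with hC
  have hNub : ‖∫ s in (0:ℝ)..t,
      (Real.exp (-(β * f (φ s))) - Real.exp (-(β * f (φ' s)))) • φ' s‖ ≤ C * t := by
    have h := intervalIntegral.norm_integral_le_of_norm_le_const (C := C)
      (f := fun s => (Real.exp (-(β * f (φ s))) - Real.exp (-(β * f (φ' s)))) • φ' s)
      (a := (0:ℝ)) (b := t) ?_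
    · rw [sub_zero, abs_of_pos ht] at h; exact h
    intro s hs
    rw [Set.uIoc_of_le ht.le] at hs
    have hsIcc : s ∈ Set.Icc (0:ℝ) t := ⟨hs.1.le, hs.2⟩
    have h1 : ‖φ s‖ ≤ n := hφn s hsIcc
    have h2 : ‖φ' s‖ ≤ n := hφ'n s hsIcc
    rw [norm_smul]
    have hexp : |Real.exp (-(β * f (φ s))) - Real.exp (-(β * f (φ' s)))| ≤
        Real.exp (-(β * A)) * (β * (Lf * M)) := by
      refine le_trans (exp_diff_le' _ _) ?_
      have hmax : max (-(β * f (φ s))) (-(β * f (φ' s))) ≤ -(β * A) := by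
        have ha := (hmem (φ s) h1).1
        have hb := (hmem (φ' s) h2).1
        apply max_le <;> nlinarith
      have habs : |(-(β * f (φ s))) - (-(β * f (φ' s)))| ≤ β * (Lf * M) := by
        have heq : |(-(β * f (φ s))) - (-(β * f (φ' s)))| = β * |f (φ s) - f (φ' s)| := by
          rw [show (-(β * f (φ s))) - (-(β * f (φ' s))) = β * (f (φ' s) - f (φ s)) by ring,
            abs_mul, abs_of_pos hβ, abs_sub_comm]
        rw [heq]
        have hl := hfLip (φ s) (φ' s) h1 h2
        have hMs := hMle s hsIcc
        exact mul_le_mul_of_nonneg_left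
          (hl.trans (mul_le_mul_of_nonneg_left hMs hLf)) hβ.le
      exact mul_le_mul (Real.exp_le_exp.2 hmax) habs (abs_nonneg _) (Real.exp_pos _).le
    have hnn : (0:ℝ) ≤ Real.exp (-(β * A)) * (β * (Lf * M)) := by positivity
    calc ‖Real.exp (-(β * f (φ s))) - Real.exp (-(β * f (φ' s)))‖ * ‖φ' s‖
        ≤ (Real.exp (-(β * A)) * (β * (Lf * M))) * n := by
          apply mul_le_mul hexp h2 (norm_nonneg _) hnn
      _ = C := by rw [hC]; ring
  -- combine
  have key : ‖∫ s in (0:ℝ)..t,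
      (Real.exp (-(β * f (φ s))) - Real.exp (-(β * f (φ' s)))) • φ' s‖
      / (∫ s in (0:ℝ)..t, Real.exp (-(β * f (φ s)))) ≤
      (C * t) / (t * Real.exp (-(β * B))) := by
    apply div_le_div₀ (by positivity) hNub (by positivity) hDlb
  refine key.trans (le_of_eq ?_)
  rw [hC, show β * (B - A) = -(β * A) + β * B by ring, Real.exp_add,
    Real.exp_neg (β * B)]
  field_simp
end
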